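/- arXiv:1003.2479 — 7 statements merged into one kernel-verified Lean document; each statement's English description precedes it below -/
import Mathlib

section
/- Suppose P is a Polish space, μ is an atomless finite Borel measure on P, κ is a cardinal with κ < cov(N), and A ⊆ P is a set such that both A and P ∖ A are unions of families of at most κ many μ-measurable sets (sets measurable with respect to the completion of μ). Then A is measurable with respect to the completion of μ, i.e., there are Borel sets B, N ⊆ P with μ(N) = 0 and A △ B ⊆ N. -/
open MeasureTheory Cardinal

/-- `cov(N)`: the least cardinality of a family of Lebesgue-null subsets of `ℝ` whose union
is all of `ℝ`. -/
noncomputable def covNull : Cardinal :=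
  sInf { c : Cardinal | ∃ S : Set (Set ℝ),
    #S = c ∧ (∀ A ∈ S, volume A = 0) ∧ ⋃₀ S = Set.univ }

lemma covNull_le {S : Set (Set ℝ)} (hnull : ∀ A ∈ S, volume A = 0)
    (hcov : ⋃₀ S = Set.univ) : covNull ≤ #S :=
  csInf_le' ⟨S, rfl, hnull, hcov⟩

lemma aleph0_lt_covNull : ℵ₀ < covNull := by
  have hne : { c : Cardinal | ∃ S : Set (Set ℝ),
      #S = c ∧ (∀ A ∈ S, volume A = 0) ∧ ⋃₀ S = Set.univ }.Nonempty := by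
    refine ⟨_, Set.range (fun x : ℝ => ({x} : Set ℝ)), rfl, ?_, ?_⟩
    · rintro A ⟨x, rfl⟩
      exact Real.volume_singleton
    · ext r
      simp only [Set.mem_sUnion, Set.mem_univ, iff_true, Set.mem_range]
      exact ⟨{r}, ⟨r, rfl⟩, rfl⟩
  obtain ⟨S, hcard, hnull, hcov⟩ := csInf_mem hne
  by_contra h
  push_neg at h
  have hc : S.Countable := by
    rw [← Set.countable_coe_iff, ← Cardinal.mk_le_aleph0_iff]
    exact hcard.le.trans h
  have : volume (⋃₀ S) = 0 := (measure_sUnion_null_iff hc).mpr hnull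
  rw [hcov] at this
  simp [Real.volume_univ] at this

lemma realCrux (ν : Measure ℝ) [IsProbabilityMeasure ν]
    (S : Set (Set ℝ)) (hcard : #S < covNull)
    (hmeas : ∀ Z ∈ S, MeasurableSet Z) (hnull : ∀ Z ∈ S, ν Z = 0)
    (hcov : ⋃₀ S = Set.univ) : False := by
  classical
  have a0 : ℵ₀ < covNull := aleph0_lt_covNull
  set F : StieltjesFunction ℝ := ProbabilityTheory.cdf ν with hF
  set g : ℝ → ℝ := fun t => if t ∈ Set.Ioo (0:ℝ) 1 then sInf {x | t ≤ F x} else 2 with hg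
  have key : ∀ t ∈ Set.Ioo (0:ℝ) 1, ∀ x : ℝ, (g t ≤ x ↔ t ≤ F x) := by
    intro t ht x
    have hne : {x : ℝ | t ≤ F x}.Nonempty := by
      obtain ⟨x, hx⟩ :=
        (Filter.Tendsto.eventually_const_le ht.2 (ProbabilityTheory.tendsto_cdf_atTop ν)).exists
      exact ⟨x, hx⟩
    have hbdd : BddBelow {x : ℝ | t ≤ F x} := by
      obtain ⟨y, hy⟩ :=
        (Filter.Tendsto.eventually_lt_const ht.1 (ProbabilityTheory.tendsto_cdf_atBot ν)).exists
      refine ⟨y, fun x hx => ?_⟩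
      by_contra hxy
      push_neg at hxy
      exact absurd (le_trans hx (F.mono hxy.le)) (not_le.2 hy)
    have hFg : t ≤ F (sInf {x : ℝ | t ≤ F x}) := by
      set a := sInf {x : ℝ | t ≤ F x} with ha
      have hall : ∀ y ∈ Set.Ioi a, t ≤ F y := by
        intro y hy
        obtain ⟨z, hz, hzy⟩ := exists_lt_of_csInf_lt hne hy
        exact hz.trans (F.mono hzy.le)
      have hc : Filter.Tendsto F (nhdsWithin a (Set.Ioi a)) (nhds (F a)) :=
        (F.right_continuous a).mono_left (nhdsWithin_mono a Set.Ioi_subset_Ici_self)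
      exact ge_of_tendsto hc (eventually_nhdsWithin_of_forall hall)
    constructor
    · intro h
      simp only [hg, if_pos ht] at h
      exact hFg.trans (F.mono h)
    · intro h
      simp only [hg, if_pos ht]
      exact csInf_le hbdd h
  have hmg : Measurable g := by
    apply measurable_of_Iic
    intro x
    have hset : g ⁻¹' Set.Iic x =
        (Set.Ioo (0:ℝ) 1 ∩ Set.Iic (F x)) ∪
        ((Set.Ioo (0:ℝ) 1)ᶜ ∩ {t : ℝ | (2:ℝ) ≤ x}) := by
      ext t
      by_cases ht : t ∈ Set.Ioo (0:ℝ) 1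
      · simp only [Set.mem_preimage, Set.mem_Iic, Set.mem_union, Set.mem_inter_iff,
          Set.mem_compl_iff, ht, not_true, false_and, or_false, true_and, Set.mem_setOf_eq]
        exact key t ht x
      · have hgt : g t = 2 := if_neg ht
        simp [hgt, ht]
    rw [hset]
    refine (measurableSet_Ioo.inter measurableSet_Iic).union
      (measurableSet_Ioo.compl.inter ?_)
    by_cases h2 : (2:ℝ) ≤ x
    · simp only [h2, Set.setOf_true]; exact MeasurableSet.univ
    · simp only [h2, Set.setOf_false]; exact MeasurableSet.empty
  set m : Measure ℝ := (volume.restrict (Set.Ioo (0:ℝ) 1)).map g with hm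
  have hfin : IsFiniteMeasure m := by
    constructor
    rw [hm, Measure.map_apply hmg MeasurableSet.univ]
    refine lt_of_le_of_lt (measure_mono (Set.subset_univ _)) ?_
    rw [Measure.restrict_apply_univ, Real.volume_Ioo]
    simp
  have hmeq : m = ν := by
    refine MeasureTheory.Measure.ext_of_Iic m ν (fun x => ?_)
    rw [hm, Measure.map_apply hmg measurableSet_Iic,
      Measure.restrict_apply (hmg measurableSet_Iic)]
    have hpre : g ⁻¹' Set.Iic x ∩ Set.Ioo (0:ℝ) 1 = Set.Ioo (0:ℝ) 1 ∩ Set.Iic (F x) := by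
      ext t
      simp only [Set.mem_inter_iff, Set.mem_preimage, Set.mem_Iic]
      constructor
      · rintro ⟨h1, h2⟩; exact ⟨h2, (key t h2 x).mp h1⟩
      · rintro ⟨h1, h2⟩; exact ⟨(key t h1 x).mpr h2, h1⟩
    rw [hpre]
    have h0 : 0 ≤ F x := ProbabilityTheory.cdf_nonneg ν x
    have h1 : F x ≤ 1 := ProbabilityTheory.cdf_le_one ν x
    have hνx : ν (Set.Iic x) = ENNReal.ofReal (F x) := (ProbabilityTheory.ofReal_cdf ν x).symm
    rw [hνx]
    rcases lt_or_ge (F x) 1 with h | h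
    · have : Set.Ioo (0:ℝ) 1 ∩ Set.Iic (F x) = Set.Ioc 0 (F x) := by
        ext t
        simp only [Set.mem_inter_iff, Set.mem_Ioo, Set.mem_Iic, Set.mem_Ioc]
        constructor
        · rintro ⟨⟨ht0, _⟩, ht2⟩; exact ⟨ht0, ht2⟩
        · rintro ⟨ht0, ht1⟩; exact ⟨⟨ht0, lt_of_le_of_lt ht1 h⟩, ht1⟩
      rw [this, Real.volume_Ioc, sub_zero]
    · have hF1 : F x = 1 := le_antisymm h1 h
      have : Set.Ioo (0:ℝ) 1 ∩ Set.Iic (F x) = Set.Ioo (0:ℝ) 1 := by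
        rw [hF1]
        ext t
        simp only [Set.mem_inter_iff, Set.mem_Ioo, Set.mem_Iic, and_iff_left_iff_imp]
        exact fun ht => ht.2.le
      rw [this, Real.volume_Ioo, sub_zero, hF1]
  have hnullpre : ∀ Z ∈ S, volume (g ⁻¹' Z ∩ Set.Ioo (0:ℝ) 1) = 0 := by
    intro Z hZ
    have hmZ : m Z = 0 := by rw [hmeq]; exact hnull Z hZ
    rwa [hm, Measure.map_apply hmg (hmeas Z hZ),
      Measure.restrict_apply (hmg (hmeas Z hZ))] at hmZ
  set base : Set ℝ → Set ℝ := fun Z => g ⁻¹' Z ∩ Set.Ioo (0:ℝ) 1 with hbase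
  set T : Set (Set ℝ) :=
    Set.range (fun p : ℤ × S => (fun u : ℝ => u + (p.1 : ℝ)) '' base (p.2 : Set ℝ)) ∪
      Set.range (fun q : ℚ => ({(q : ℝ)} : Set ℝ)) with hT
  have hTnull : ∀ X ∈ T, volume X = 0 := by
    rintro X (⟨⟨n, Z⟩, rfl⟩ | ⟨q, rfl⟩)
    · show volume ((fun u : ℝ => u + (n:ℝ)) '' base (Z : Set ℝ)) = 0
      rw [Set.image_add_right, measure_preimage_add_right]
      exact hnullpre (Z : Set ℝ) Z.2
    · exact Real.volume_singleton
  have hTcov : ⋃₀ T = Set.univ := by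
    ext r
    simp only [Set.mem_sUnion, Set.mem_univ, iff_true]
    by_cases hr : Int.fract r = 0
    · refine ⟨{((⌊r⌋ : ℚ) : ℝ)}, Or.inr ⟨(⌊r⌋ : ℚ), rfl⟩, ?_⟩
      have hrf : r = (⌊r⌋ : ℝ) := by
        have := Int.fract_add_floor r
        rw [hr, zero_add] at this
        exact this.symm
      have hcast : ((⌊r⌋ : ℚ) : ℝ) = ((⌊r⌋ : ℤ) : ℝ) := by push_cast; ring
      exact Set.mem_singleton_iff.mpr (hrf.trans hcast.symm)
    · have hfr : Int.fract r ∈ Set.Ioo (0:ℝ) 1 :=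
        ⟨(Int.fract_nonneg r).lt_of_ne (Ne.symm hr), Int.fract_lt_one r⟩
      have hmem : g (Int.fract r) ∈ ⋃₀ S := by rw [hcov]; exact Set.mem_univ _
      obtain ⟨Z, hZS, hZ⟩ := hmem
      refine ⟨(fun u : ℝ => u + ((⌊r⌋ : ℤ) : ℝ)) '' base Z,
        Or.inl ⟨(⌊r⌋, ⟨Z, hZS⟩), rfl⟩, ?_⟩
      exact ⟨Int.fract r, ⟨hZ, hfr⟩, Int.fract_add_floor r⟩
  have hle : covNull ≤ #T := covNull_le hTnull hTcov
  have hlt : #T < covNull := by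
    refine lt_of_le_of_lt ((Cardinal.mk_union_le _ _).trans
      (add_le_add Cardinal.mk_range_le Cardinal.mk_range_le)) ?_
    have hZS : #(ℤ × S) = ℵ₀ * #S := by
      rw [Cardinal.mk_prod, Cardinal.mk_int, Cardinal.lift_id, Cardinal.lift_id]
    rw [hZS, Cardinal.mkRat]
    exact Cardinal.add_lt_of_lt a0.le (Cardinal.mul_lt_of_lt a0.le a0 hcard) a0
  exact absurd hle (not_le.2 hlt)

lemma crux {P : Type} [MeasurableSpace P] [StandardBorelSpace P]
    (μ : Measure P) [IsFiniteMeasure μ] (hne : μ ≠ 0)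
    (S : Set (Set P)) (hcard : #S < covNull)
    (hnull : ∀ Z ∈ S, μ Z = 0) (hcov : ⋃₀ S = Set.univ) : False := by
  classical
  have a0 : ℵ₀ < covNull := aleph0_lt_covNull
  obtain ⟨f, hf⟩ := MeasureTheory.exists_measurableEmbedding_real P
  have hhull : ∀ Z ∈ S, ∃ M : Set P, Z ⊆ M ∧ MeasurableSet M ∧ μ M = 0 :=
    fun Z hZ => exists_measurable_superset_of_null (hnull Z hZ)
  choose! M hM₁ hM₂ hM₃ using hhull
  set c := μ Set.univ with hc
  have hc0 : c ≠ 0 := fun h => hne (Measure.measure_univ_eq_zero.mp h)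
  have hctop : c ≠ ⊤ := measure_ne_top μ _
  set ν : Measure ℝ := c⁻¹ • (μ.map f) with hν
  have hmapuniv : (μ.map f) Set.univ = c := by
    rw [Measure.map_apply hf.measurable MeasurableSet.univ, Set.preimage_univ]
  have hprob : IsProbabilityMeasure ν := by
    constructor
    rw [hν, Measure.smul_apply, hmapuniv, smul_eq_mul, ENNReal.inv_mul_cancel hc0 hctop]
  set S₀ : Set (Set ℝ) := insert (Set.range f)ᶜ ((fun Z => f '' M Z) '' S) with hS₀
  refine realCrux ν S₀ ?_ ?_ ?_ ?_
  · refine lt_of_le_of_lt (Cardinal.mk_insert_le.trans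
      (add_le_add_left Cardinal.mk_image_le 1)) ?_
    exact Cardinal.add_lt_of_lt a0.le hcard (lt_trans (lt_of_lt_of_le one_lt_aleph0 le_rfl) a0)
  · rintro X (rfl | ⟨Z, hZ, rfl⟩)
    · exact hf.measurableSet_range.compl
    · exact hf.measurableSet_image.mpr (hM₂ Z hZ)
  · rintro X (rfl | ⟨Z, hZ, rfl⟩)
    · rw [hν, Measure.smul_apply,
        Measure.map_apply hf.measurable hf.measurableSet_range.compl]
      have : f ⁻¹' (Set.range f)ᶜ = ∅ := by
        ext p; simp [Set.mem_range]
      rw [this, measure_empty, smul_eq_mul, mul_zero]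
    · rw [hν, Measure.smul_apply,
        Measure.map_apply hf.measurable (hf.measurableSet_image.mpr (hM₂ Z hZ)),
        hf.injective.preimage_image, hM₃ Z hZ, smul_eq_mul, mul_zero]
  · ext r
    simp only [Set.mem_sUnion, Set.mem_univ, iff_true]
    by_cases hr : r ∈ Set.range f
    · obtain ⟨p, rfl⟩ := hr
      have : p ∈ ⋃₀ S := by rw [hcov]; exact Set.mem_univ _
      obtain ⟨Z, hZS, hZ⟩ := this
      exact ⟨f '' M Z, Set.mem_insert_of_mem _ ⟨Z, hZS, rfl⟩,
        Set.mem_image_of_mem f (hM₁ Z hZS hZ)⟩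
    · exact ⟨(Set.range f)ᶜ, Set.mem_insert _ _, hr⟩

lemma exists_maximal {P : Type} [MeasurableSpace P]
    (μ : Measure P) [IsFiniteMeasure μ] (W : Set P) :
    ∃ B N0 : Set P, MeasurableSet B ∧ MeasurableSet N0 ∧ μ N0 = 0 ∧ B ⊆ W ∪ N0 ∧
      ∀ X : Set P, MeasurableSet X → Disjoint X B →
        (∃ N1 : Set P, MeasurableSet N1 ∧ μ N1 = 0 ∧ X ⊆ W ∪ N1) → μ X = 0 := by
  classical
  set 𝔅 : Set (Set P) :=
    {X | MeasurableSet X ∧ ∃ N1 : Set P, MeasurableSet N1 ∧ μ N1 = 0 ∧ X ⊆ W ∪ N1} with h𝔅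
  have hEmptyMem : (∅ : Set P) ∈ 𝔅 :=
    ⟨MeasurableSet.empty, ∅, MeasurableSet.empty, measure_empty, Set.empty_subset _⟩
  set Sμ : Set ENNReal := μ '' 𝔅 with hSμ
  have hSμne : Sμ.Nonempty := ⟨_, Set.mem_image_of_mem μ hEmptyMem⟩
  obtain ⟨u, -, hu₂, hu₃⟩ := exists_seq_tendsto_sSup hSμne (OrderTop.bddAbove Sμ)
  choose X hX₁ hX₂ using hu₃
  have hXm : ∀ n, MeasurableSet (X n) := fun n => (hX₁ n).1
  choose N1 hN1m hN1z hN1s using fun n => (hX₁ n).2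
  set B := ⋃ n, X n with hB
  set N0 := ⋃ n, N1 n with hN0
  have hBm : MeasurableSet B := MeasurableSet.iUnion hXm
  have hN0m : MeasurableSet N0 := MeasurableSet.iUnion hN1m
  have hN0z : μ N0 = 0 := measure_iUnion_null hN1z
  have hBsub : B ⊆ W ∪ N0 := by
    intro x hx
    obtain ⟨n, hn⟩ := Set.mem_iUnion.mp hx
    rcases hN1s n hn with h | h
    · exact Or.inl h
    · exact Or.inr (Set.mem_iUnion.mpr ⟨n, h⟩)
  have hBmem : B ∈ 𝔅 := ⟨hBm, N0, hN0m, hN0z, hBsub⟩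
  have hBge : sSup Sμ ≤ μ B := by
    refine le_of_tendsto hu₂ (Filter.Eventually.of_forall fun n => ?_)
    rw [← hX₂ n]
    exact measure_mono (Set.subset_iUnion X n)
  refine ⟨B, N0, hBm, hN0m, hN0z, hBsub, ?_⟩
  rintro Y hYm hYdisj ⟨N2, hN2m, hN2z, hN2s⟩
  have hUmem : (B ∪ Y) ∈ 𝔅 := by
    refine ⟨hBm.union hYm, N0 ∪ N2, hN0m.union hN2m, ?_, ?_⟩
    · exact measure_union_null hN0z hN2z
    · intro x hx
      rcases hx with hx | hx
      · rcases hBsub hx with h | h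
        · exact Or.inl h
        · exact Or.inr (Or.inl h)
      · rcases hN2s hx with h | h
        · exact Or.inl h
        · exact Or.inr (Or.inr h)
  have hUle : μ (B ∪ Y) ≤ sSup Sμ := le_csSup (OrderTop.bddAbove Sμ) (Set.mem_image_of_mem μ hUmem)
  have hsum : μ B + μ Y ≤ μ B := by
    rw [← measure_union hYdisj.symm hYm]
    exact hUle.trans hBge
  have : μ B + μ Y ≤ μ B + 0 := by rwa [add_zero]
  exact le_antisymm ((ENNReal.add_le_add_iff_left (measure_ne_top μ B)).mp this) zero_le

/-- Suppose `P` is a Polish space, `μ` is an atomless finite Borel measure on `P`,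
`κ < cov(N)`, and `A ⊆ P` is such that both `A` and `P \ A` are unions of families of at most
`κ` many sets measurable with respect to the completion of `μ`. Then `A` is measurable with
respect to the completion of `μ`. -/
theorem stmt4 {P : Type} [TopologicalSpace P] [PolishSpace P] [MeasurableSpace P] [BorelSpace P]
    (μ : Measure P) (hfin : IsFiniteMeasure μ) (hatom : ∀ x : P, μ {x} = 0)
    (κ : Cardinal) (hκ : κ < covNull)
    (A : Set P)
    (hA : ∃ S : Set (Set P), #S ≤ κ ∧
      (∀ E ∈ S, ∃ B N : Set P, MeasurableSet B ∧ MeasurableSet N ∧ μ N = 0 ∧ symmDiff E B ⊆ N) ∧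
      ⋃₀ S = A)
    (hAc : ∃ S : Set (Set P), #S ≤ κ ∧
      (∀ E ∈ S, ∃ B N : Set P, MeasurableSet B ∧ MeasurableSet N ∧ μ N = 0 ∧ symmDiff E B ⊆ N) ∧
      ⋃₀ S = Aᶜ) :
    ∃ B N : Set P, MeasurableSet B ∧ MeasurableSet N ∧ μ N = 0 ∧ symmDiff A B ⊆ N := by
  classical
  haveI := hfin
  have a0 : ℵ₀ < covNull := aleph0_lt_covNull
  obtain ⟨S, hScard, hSmeas, hSun⟩ := hA
  obtain ⟨S', hS'card, hS'meas, hS'un⟩ := hAc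
  choose! BB NN hBBm hNNm hNNz hBBsym using hSmeas
  choose! CC MM hCCm hMMm hMMz hCCsym using hS'meas
  obtain ⟨B, N0, hBm, hN0m, hN0z, hBsub, hBmax⟩ := exists_maximal μ A
  obtain ⟨C, M0, hCm, hM0m, hM0z, hCsub, hCmax⟩ := exists_maximal μ Aᶜ
  set D := (B ∪ C)ᶜ with hD
  have hDm : MeasurableSet D := (hBm.union hCm).compl
  have hDz : μ D = 0 := by
    by_contra hDz
    set ρ := μ.restrict D with hρ
    have hρne : ρ ≠ 0 := by
      intro h
      apply hDz
      have := congrArg (fun m : Measure P => m Set.univ) h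
      simpa [hρ, Measure.restrict_apply_univ] using this
    refine crux ρ hρne (S ∪ S') ?_ ?_ ?_
    · exact lt_of_le_of_lt (Cardinal.mk_union_le _ _)
        (Cardinal.add_lt_of_lt a0.le (lt_of_le_of_lt hScard hκ) (lt_of_le_of_lt hS'card hκ))
    · intro Z hZ
      rcases hZ with hZ | hZ
      · have hZB : Z ⊆ BB Z ∪ NN Z := by
          intro x hx
          by_cases h : x ∈ BB Z
          · exact Or.inl h
          · exact Or.inr (hBBsym Z hZ (Or.inl ⟨hx, h⟩))
        have hNNρ : ρ (NN Z) = 0 :=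
          le_antisymm ((Measure.restrict_apply_le D (NN Z)).trans (hNNz Z hZ).le) zero_le
        have hBBρ : ρ (BB Z) = 0 := by
          rw [hρ, Measure.restrict_apply (hBBm Z hZ)]
          refine hBmax (BB Z ∩ D) ((hBBm Z hZ).inter hDm) ?_ ⟨NN Z, hNNm Z hZ, hNNz Z hZ, ?_⟩
          · refine Set.disjoint_left.mpr fun x hx hxB => ?_
            exact hx.2 (Or.inl hxB)
          · rintro x ⟨hxB, -⟩
            by_cases h : x ∈ NN Z
            · exact Or.inr h
            · have hxZ : x ∈ Z := by
                by_contra hxZ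
                exact h (hBBsym Z hZ (Or.inr ⟨hxB, hxZ⟩))
              exact Or.inl (hSun ▸ Set.mem_sUnion.mpr ⟨Z, hZ, hxZ⟩)
        refine le_antisymm ?_ zero_le
        calc ρ Z ≤ ρ (BB Z ∪ NN Z) := measure_mono hZB
          _ ≤ ρ (BB Z) + ρ (NN Z) := measure_union_le _ _
          _ = 0 := by rw [hNNρ, hBBρ, add_zero]
      · have hZC : Z ⊆ CC Z ∪ MM Z := by
          intro x hx
          by_cases h : x ∈ CC Z
          · exact Or.inl h
          · exact Or.inr (hCCsym Z hZ (Or.inl ⟨hx, h⟩))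
        have hMMρ : ρ (MM Z) = 0 :=
          le_antisymm ((Measure.restrict_apply_le D (MM Z)).trans (hMMz Z hZ).le) zero_le
        have hCCρ : ρ (CC Z) = 0 := by
          rw [hρ, Measure.restrict_apply (hCCm Z hZ)]
          refine hCmax (CC Z ∩ D) ((hCCm Z hZ).inter hDm) ?_ ⟨MM Z, hMMm Z hZ, hMMz Z hZ, ?_⟩
          · refine Set.disjoint_left.mpr fun x hx hxC => ?_
            exact hx.2 (Or.inr hxC)
          · rintro x ⟨hxC, -⟩
            by_cases h : x ∈ MM Z
            · exact Or.inr h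
            · have hxZ : x ∈ Z := by
                by_contra hxZ
                exact h (hCCsym Z hZ (Or.inr ⟨hxC, hxZ⟩))
              exact Or.inl (hS'un ▸ Set.mem_sUnion.mpr ⟨Z, hZ, hxZ⟩)
        refine le_antisymm ?_ zero_le
        calc ρ Z ≤ ρ (CC Z ∪ MM Z) := measure_mono hZC
          _ ≤ ρ (CC Z) + ρ (MM Z) := measure_union_le _ _
          _ = 0 := by rw [hMMρ, hCCρ, add_zero]
    · rw [Set.sUnion_union, hSun, hS'un, Set.union_compl_self]
  refine ⟨B, N0 ∪ M0 ∪ D, hBm, (hN0m.union hM0m).union hDm, ?_, ?_⟩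
  · refine measure_union_null (measure_union_null hN0z hM0z) hDz
  · intro x hx
    rcases hx with ⟨hxA, hxB⟩ | ⟨hxB, hxA⟩
    · by_cases hxC : x ∈ C
      · rcases hCsub hxC with h | h
        · exact absurd hxA h
        · exact Or.inl (Or.inr h)
      · exact Or.inr (fun h => (h.elim hxB hxC))
    · rcases hBsub hxB with h | h
      · exact absurd h hxA
      · exact Or.inl (Or.inl h)
end

section
/- Let P be a Polish space and κ a cardinal. Suppose that for every finite Borel measure μ on P and every family of at most κ many Borel μ-null subsets of P, the union of the family is contained in a Borel μ-null set. Then the union of any family of at most κ many Borel subsets of P is universally measurable. -/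
open MeasureTheory Cardinal

/-- Let `P` be a Polish space and `κ` a cardinal. Suppose that for every finite Borel measure `μ`
on `P` and every family of at most `κ` many Borel `μ`-null subsets of `P`, the union of the
family is contained in a Borel `μ`-null set. Then the union of any family of at most `κ` many
Borel subsets of `P` is universally measurable. -/
theorem stmt6 {P : Type} [TopologicalSpace P] [PolishSpace P] [MeasurableSpace P] [BorelSpace P]
    (κ : Cardinal)
    (h : ∀ μ : Measure P, IsFiniteMeasure μ →
      ∀ S : Set (Set P), #S ≤ κ → (∀ A ∈ S, MeasurableSet A ∧ μ A = 0) →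
        ∃ N : Set P, MeasurableSet N ∧ μ N = 0 ∧ ⋃₀ S ⊆ N) :
    ∀ S : Set (Set P), #S ≤ κ → (∀ A ∈ S, MeasurableSet A) →
      ∀ μ : Measure P, SigmaFinite μ →
        ∃ B N : Set P, MeasurableSet B ∧ MeasurableSet N ∧ μ N = 0 ∧ symmDiff (⋃₀ S) B ⊆ N := by
  intro S hScard hSmeas μ _
  obtain ⟨ν, hνfin, hμν, hνμ⟩ := exists_isFiniteMeasure_absolutelyContinuous μ
  -- the set of values of ν on countable subunions
  set T : Set ENNReal := (fun F : Set (Set P) => ν (⋃₀ F)) '' {F | F ⊆ S ∧ F.Countable} with hT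
  have hTne : T.Nonempty := ⟨ν (⋃₀ (∅ : Set (Set P))), ⟨∅, ⟨Set.empty_subset _, Set.countable_empty⟩, rfl⟩⟩
  obtain ⟨u, hu_mono, hu_tendsto, hu_mem⟩ := exists_seq_tendsto_sSup hTne (OrderTop.bddAbove T)
  choose F hF hFval using hu_mem
  set B : Set P := ⋃ n, ⋃₀ (F n) with hB
  have hBsub : B ⊆ ⋃₀ S := by
    apply Set.iUnion_subset
    intro n
    exact Set.sUnion_subset_sUnion (hF n).1
  have hBmeas : MeasurableSet B := by
    apply MeasurableSet.iUnion
    intro n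
    exact MeasurableSet.sUnion (hF n).2 (fun A hA => hSmeas A ((hF n).1 hA))
  -- B itself is a countable subunion
  have hBval : ν B ∈ T := by
    refine ⟨⋃ n, F n, ⟨Set.iUnion_subset fun n => (hF n).1,
      Set.countable_iUnion fun n => (hF n).2⟩, ?_⟩
    simp only [Set.sUnion_iUnion]; rfl
  have hBsup : ν B = sSup T := by
    refine le_antisymm (le_sSup hBval) ?_
    refine le_of_tendsto hu_tendsto (Filter.Eventually.of_forall fun n => ?_)
    rw [← hFval n]
    exact measure_mono (Set.subset_iUnion (fun n => ⋃₀ (F n)) n)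
  -- every A ∈ S has ν-null part outside B
  have hnull : ∀ A ∈ S, ν (A \ B) = 0 := by
    intro A hA
    have hABmem : ν (A ∪ B) ∈ T := by
      refine ⟨insert A (⋃ n, F n), ⟨Set.insert_subset hA (Set.iUnion_subset fun n => (hF n).1),
        (Set.countable_iUnion fun n => (hF n).2).insert A⟩, ?_⟩
      simp only [Set.sUnion_insert, Set.sUnion_iUnion]; rfl
    have hAB : ν (A ∪ B) ≤ ν B := hBsup ▸ le_sSup hABmem
    have hmeasA : MeasurableSet (A \ B) := (hSmeas A hA).diff hBmeas
    have hdisj : Disjoint B (A \ B) := Set.disjoint_sdiff_right.mono_left le_rfl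
    have hunion : ν (B ∪ (A \ B)) = ν B + ν (A \ B) := measure_union hdisj hmeasA
    have heq : B ∪ (A \ B) = A ∪ B := by
      ext x; by_cases hx : x ∈ B <;> simp [hx]
    rw [heq] at hunion
    have : ν B + ν (A \ B) ≤ ν B + 0 := by
      rw [add_zero, ← hunion]; exact hAB
    have := (ENNReal.add_le_add_iff_left (measure_ne_top ν B)).mp this
    exact le_antisymm this zero_le
  -- apply the hypothesis to the null family
  set S' : Set (Set P) := (fun A => A \ B) '' S with hS'
  obtain ⟨N, hNmeas, hNnull, hNsub⟩ := h ν hνfin S'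
    (le_trans Cardinal.mk_image_le hScard)
    (by
      rintro _ ⟨A, hA, rfl⟩
      exact ⟨(hSmeas A hA).diff hBmeas, hnull A hA⟩)
  refine ⟨B, N, hBmeas, hNmeas, hμν hNnull, ?_⟩
  intro x hx
  rcases Set.mem_symmDiff.mp hx with ⟨hx1, hx2⟩ | ⟨hx1, hx2⟩
  · obtain ⟨A, hA, hxA⟩ := hx1
    exact hNsub ⟨A \ B, ⟨A, hA, rfl⟩, hxA, hx2⟩
  · exact absurd (hBsub hx1) hx2
end

section
/- If P is a Polish space and μ is an atomless Borel probability measure on P, then the least cardinality of a family of μ-null subsets of P whose union is P equals cov(N), the least cardinality of a family of Lebesgue-null subsets of ℝ whose union is ℝ. -/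
open MeasureTheory ProbabilityTheory Set Filter Topology

section CDFLemmas

variable (ν : Measure ℝ) [IsProbabilityMeasure ν]

lemma my_cdf_continuous (hν : ∀ x : ℝ, ν {x} = 0) : Continuous (cdf ν) := by
  rw [continuous_iff_continuousAt]
  intro x
  rw [(cdf ν).mono.continuousAt_iff_leftLim_eq_rightLim, (cdf ν).rightLim_eq]
  have h1 : (cdf ν).measure {x} = 0 := by rw [measure_cdf]; exact hν x
  rw [StieltjesFunction.measure_singleton] at h1
  have h2 : Function.leftLim (cdf ν) x ≤ cdf ν x := (cdf ν).mono.leftLim_le le_rfl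
  have h3 : cdf ν x - Function.leftLim (cdf ν) x ≤ 0 := ENNReal.ofReal_eq_zero.mp h1
  linarith

lemma my_map_cdf (hν : ∀ x : ℝ, ν {x} = 0) :
    ν.map (cdf ν) = volume.restrict (Icc 0 1) := by
  have hF : Measurable (cdf ν) := (cdf ν).mono.measurable
  refine Measure.ext_of_Iic _ _ (fun t => ?_)
  rw [Measure.map_apply hF measurableSet_Iic, Measure.restrict_apply' measurableSet_Icc]
  rcases lt_or_ge t 0 with ht | ht
  · have h1 : (cdf ν) ⁻¹' Iic t = ∅ := by
      ext x; simp only [mem_preimage, mem_Iic, mem_empty_iff_false, iff_false, not_le]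
      exact ht.trans_le (cdf_nonneg ν x)
    have h2 : Iic t ∩ Icc (0:ℝ) 1 = ∅ := by
      ext x; simp only [mem_inter_iff, mem_Iic, mem_Icc, mem_empty_iff_false, iff_false]
      rintro ⟨hx, hx0, -⟩; exact absurd (hx0.trans hx) (not_le.mpr ht)
    simp [h1, h2]
  rcases le_or_gt 1 t with ht1 | ht1
  · have h1 : (cdf ν) ⁻¹' Iic t = univ := by
      ext x; simp only [mem_preimage, mem_Iic, mem_univ, iff_true]
      exact (cdf_le_one ν x).trans ht1
    have h2 : Iic t ∩ Icc (0:ℝ) 1 = Icc 0 1 := by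
      ext x; simp only [mem_inter_iff, mem_Iic, mem_Icc, and_iff_right_iff_imp]
      exact fun hx => hx.2.trans ht1
    rw [h1, h2, Real.volume_Icc, measure_univ]
    simp
  · have h2 : volume (Iic t ∩ Icc (0:ℝ) 1) = ENNReal.ofReal t := by
      have he : Iic t ∩ Icc (0:ℝ) 1 = Icc 0 t := by
        ext x
        simp only [mem_inter_iff, mem_Iic, mem_Icc]
        constructor
        · rintro ⟨hx, hx0, -⟩; exact ⟨hx0, hx⟩
        · rintro ⟨hx0, hx⟩; exact ⟨hx, hx0, hx.trans ht1.le⟩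
      rw [he, Real.volume_Icc, sub_zero]
    rw [h2]
    by_cases hne : ((cdf ν) ⁻¹' Iic t).Nonempty
    · have hbdd : BddAbove ((cdf ν) ⁻¹' Iic t) := by
        obtain ⟨b, hb⟩ : ∃ b, t < cdf ν b :=
          ((tendsto_cdf_atTop ν).eventually_const_lt ht1).exists
        refine ⟨b, fun x hx => ?_⟩
        by_contra hxb
        push_neg at hxb
        exact absurd ((monotone_cdf ν hxb.le).trans (mem_Iic.mp hx)) (not_le.mpr hb)
      have hclosed : IsClosed ((cdf ν) ⁻¹' Iic t) :=
        isClosed_Iic.preimage (my_cdf_continuous ν hν)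
      set a := sSup ((cdf ν) ⁻¹' Iic t) with ha_def
      have ha : a ∈ (cdf ν) ⁻¹' Iic t := hclosed.csSup_mem hne hbdd
      have haF : cdf ν a = t := by
        refine le_antisymm (mem_Iic.mp ha) ?_
        by_contra h
        push_neg at h
        have hev : ∀ᶠ x in 𝓝 a, cdf ν x < t :=
          ((my_cdf_continuous ν hν).continuousAt (x := a)).eventually_lt_const h
        have hev' : ∀ᶠ x in 𝓝[>] a, cdf ν x < t := hev.filter_mono nhdsWithin_le_nhds
        obtain ⟨x, hxlt, hxa⟩ := (hev'.and eventually_mem_nhdsWithin).exists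
        exact absurd (le_csSup hbdd (mem_Iic.mpr hxlt.le)) (not_le.mpr hxa)
      have hIic : (cdf ν) ⁻¹' Iic t = Iic a := by
        ext x
        simp only [mem_preimage, mem_Iic]
        constructor
        · exact fun hx => le_csSup hbdd hx
        · exact fun hx => (monotone_cdf ν hx).trans haF.le
      rw [hIic, ← ofReal_cdf, haF]
    · rw [not_nonempty_iff_eq_empty] at hne
      rw [hne, measure_empty]
      symm
      rw [ENNReal.ofReal_eq_zero]
      by_contra h
      push_neg at h
      obtain ⟨b, hb⟩ := ((tendsto_cdf_atBot ν).eventually_lt_const h).exists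
      exact absurd (mem_Iic.mpr hb.le) (by rw [← mem_preimage, hne] at *; exact fun hx => hx)

/-- Quantile function. -/
noncomputable def myQuant : ℝ → ℝ := fun t => sInf {y | t ≤ cdf ν y}

variable {ν}

lemma myQuant_set_nonempty {t : ℝ} (ht : t < 1) : {y | t ≤ cdf ν y}.Nonempty := by
  obtain ⟨b, hb⟩ := ((tendsto_cdf_atTop ν).eventually_const_lt ht).exists
  exact ⟨b, hb.le⟩

lemma myQuant_set_bddBelow {t : ℝ} (ht : 0 < t) : BddBelow {y | t ≤ cdf ν y} := by
  obtain ⟨b, hb⟩ := ((tendsto_cdf_atBot ν).eventually_lt_const ht).exists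
  refine ⟨b, fun y hy => ?_⟩
  by_contra hyb
  push_neg at hyb
  exact absurd ((mem_setOf.mp hy).trans (monotone_cdf ν hyb.le)) (not_le.mpr hb)

lemma myQuant_le_iff (hν : ∀ x : ℝ, ν {x} = 0) {t x : ℝ} (ht : t ∈ Ioo (0:ℝ) 1) :
    myQuant ν t ≤ x ↔ t ≤ cdf ν x := by
  constructor
  · intro h
    have hclosed : IsClosed {y | t ≤ cdf ν y} :=
      isClosed_Ici.preimage (my_cdf_continuous ν hν)
    have hmem : myQuant ν t ∈ {y | t ≤ cdf ν y} :=
      hclosed.csInf_mem (myQuant_set_nonempty ht.2) (myQuant_set_bddBelow ht.1)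
    exact (mem_setOf.mp hmem).trans (monotone_cdf ν h)
  · intro h
    exact csInf_le (myQuant_set_bddBelow ht.1) h

lemma myQuant_monotoneOn : MonotoneOn (myQuant ν) (Ioo 0 1) := by
  intro t1 h1 t2 h2 h12
  exact csInf_le_csInf (myQuant_set_bddBelow h1.1) (myQuant_set_nonempty h2.2)
    (fun y hy => le_trans h12 hy)

lemma myQuant_aemeasurable :
    AEMeasurable (myQuant ν) (volume.restrict (Ioo 0 1)) :=
  aemeasurable_restrict_of_monotoneOn measurableSet_Ioo myQuant_monotoneOn

lemma my_map_quant (hν : ∀ x : ℝ, ν {x} = 0) :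
    (volume.restrict (Ioo 0 1)).map (myQuant ν) = ν := by
  have hprob : IsProbabilityMeasure (volume.restrict (Ioo (0:ℝ) 1)) := by
    constructor
    rw [Measure.restrict_apply_univ, Real.volume_Ioo]
    simp
  refine Measure.ext_of_Iic _ _ (fun x => ?_)
  rw [Measure.map_apply_of_aemeasurable myQuant_aemeasurable measurableSet_Iic,
    Measure.restrict_apply' measurableSet_Ioo, ← ofReal_cdf]
  have hset : myQuant ν ⁻¹' Iic x ∩ Ioo 0 1 = Iic (cdf ν x) ∩ Ioo 0 1 := by
    ext t
    simp only [mem_inter_iff, mem_preimage, mem_Iic]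
    constructor
    · rintro ⟨h1, h2⟩; exact ⟨(myQuant_le_iff hν h2).mp h1, h2⟩
    · rintro ⟨h1, h2⟩; exact ⟨(myQuant_le_iff hν h2).mpr h1, h2⟩
  rw [hset]
  have c0 := cdf_nonneg ν x
  have c1 := cdf_le_one ν x
  refine le_antisymm ?_ ?_
  · refine (measure_mono (?_ : _ ⊆ Ioc 0 (cdf ν x))).trans ?_
    · rintro t ⟨h1, h2⟩; exact ⟨h2.1, h1⟩
    · rw [Real.volume_Ioc, sub_zero]
  · refine le_trans (le_of_eq ?_) (measure_mono (?_ : Ioo 0 (cdf ν x) ⊆ _))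
    · rw [Real.volume_Ioo, sub_zero]
    · rintro t ⟨h1, h2⟩; exact ⟨h2.le, h1, h2.trans_le c1⟩

end CDFLemmas



open MeasureTheory Cardinal

/-- If `P` is a Polish space and `μ` is an atomless Borel probability measure on `P`, then the
least cardinality of a family of `μ`-null subsets of `P` (sets contained in a Borel set of
`μ`-measure `0`) whose union is `P` equals `cov(N)`. -/
theorem stmt8 {P : Type} [TopologicalSpace P] [PolishSpace P] [MeasurableSpace P] [BorelSpace P]
    (μ : Measure P) (hprob : IsProbabilityMeasure μ) (hatom : ∀ x : P, μ {x} = 0) :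
    sInf { c : Cardinal | ∃ S : Set (Set P), #S = c ∧
      (∀ A ∈ S, ∃ N : Set P, MeasurableSet N ∧ A ⊆ N ∧ μ N = 0) ∧ ⋃₀ S = Set.univ }
      = covNull := by
  classical
  obtain ⟨s, hs, ⟨e⟩⟩ := exists_subset_real_measurableEquiv (α := P)
  set φ : P → ℝ := fun p => ((e p : s) : ℝ) with hφ_def
  have hφ : Measurable φ := measurable_subtype_coe.comp e.measurable
  have hφinj : Function.Injective φ := fun a b hab => e.injective (Subtype.coe_injective hab)
  set ν : Measure ℝ := μ.map φ with hν_def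
  have hνprob : IsProbabilityMeasure ν := Measure.isProbabilityMeasure_map hφ.aemeasurable
  have hν : ∀ x : ℝ, ν {x} = 0 := by
    intro x
    rw [hν_def, Measure.map_apply hφ (measurableSet_singleton x)]
    rcases Set.eq_empty_or_nonempty (φ ⁻¹' {x}) with hemp | ⟨p, hp⟩
    · rw [hemp]; exact measure_empty
    · refine measure_mono_null (fun q hq => ?_) (hatom p)
      rw [Set.mem_preimage, Set.mem_singleton_iff] at hq hp
      exact Set.mem_singleton_iff.mpr (hφinj (hq.trans hp.symm))
  have hνs : ν sᶜ = 0 := by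
    rw [hν_def, Measure.map_apply hφ hs.compl]
    have hφs : φ ⁻¹' sᶜ = ∅ := by
      ext p
      simp only [Set.mem_preimage, Set.mem_compl_iff, Set.mem_empty_iff_false, iff_false,
        not_not, hφ_def]
      exact (e p).2
    rw [hφs]; exact measure_empty
  have himg : ∀ N : Set P, MeasurableSet N → MeasurableSet (φ '' N) := by
    intro N hN
    have h1 : φ '' N = (Subtype.val : s → ℝ) '' (⇑e '' N) := by
      rw [Set.image_image]
    rw [h1, MeasurableEquiv.image_eq_preimage_symm]
    exact MeasurableSet.subtype_image hs (e.symm.measurable hN)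
  have himg2 : ∀ N : Set P, MeasurableSet N → ν (φ '' N) = μ N := by
    intro N hN
    rw [hν_def, Measure.map_apply hφ (himg N hN), Set.preimage_image_eq N hφinj]
  have hPne : Nonempty P := by
    by_contra hcon
    rw [not_nonempty_iff] at hcon
    have h1 := hprob.measure_univ
    rw [Set.univ_eq_empty_iff.mpr hcon, measure_empty] at h1
    exact zero_ne_one h1
  refine le_antisymm ?_ ?_
  · -- LHS ≤ covNull
    refine le_csInf ⟨#(Set.range fun x : ℝ => ({x} : Set ℝ)),
      Set.range fun x : ℝ => ({x} : Set ℝ), rfl, ?_, ?_⟩ ?_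
    · rintro A ⟨x, rfl⟩
      exact measure_singleton x
    · ext y
      simp only [Set.mem_sUnion, Set.mem_range, Set.mem_univ, iff_true]
      exact ⟨{y}, ⟨y, rfl⟩, rfl⟩
    · rintro c ⟨S, hScard, hSnull, hScov⟩
      set f : P → ℝ := fun p => ProbabilityTheory.cdf ν (φ p) with hf_def
      have hfmeas : Measurable f := (ProbabilityTheory.cdf ν).mono.measurable.comp hφ
      have hmapf : μ.map f = volume.restrict (Set.Icc 0 1) := by
        have h1 : μ.map f = ν.map (ProbabilityTheory.cdf ν) := by
          rw [hν_def, Measure.map_map (ProbabilityTheory.cdf ν).mono.measurable hφ]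
          rfl
        rw [h1, my_map_cdf ν hν]
      refine le_trans (csInf_le' ⟨(fun A => f ⁻¹' A) '' S, rfl, ?_, ?_⟩) ?_
      · rintro A' ⟨A, hA, rfl⟩
        obtain ⟨NA, hANA, hNAmeas, hNA0⟩ := exists_measurable_superset_of_null (hSnull A hA)
        refine ⟨f ⁻¹' NA, hfmeas hNAmeas, Set.preimage_mono hANA, ?_⟩
        have h2 : μ (f ⁻¹' NA) = (μ.map f) NA := (Measure.map_apply hfmeas hNAmeas).symm
        rw [h2, hmapf, Measure.restrict_apply' measurableSet_Icc]
        exact measure_mono_null Set.inter_subset_left hNA0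
      · ext x
        simp only [Set.sUnion_image, Set.mem_iUnion, Set.mem_preimage, Set.mem_univ, iff_true,
          exists_prop]
        have h3 : f x ∈ ⋃₀ S := by rw [hScov]; exact Set.mem_univ _
        obtain ⟨A, hA, hxA⟩ := h3
        exact ⟨A, hA, hxA⟩
      · rw [← hScard]
        exact mk_image_le
  · -- covNull ≤ LHS
    refine le_csInf ⟨#(Set.range fun p : P => ({p} : Set P)),
      Set.range fun p : P => ({p} : Set P), rfl, ?_, ?_⟩ ?_
    · rintro A ⟨p, rfl⟩
      exact ⟨{p}, measurableSet_singleton p, le_refl _, hatom p⟩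
    · ext q
      simp only [Set.mem_sUnion, Set.mem_range, Set.mem_univ, iff_true]
      exact ⟨{q}, ⟨q, rfl⟩, rfl⟩
    · rintro c ⟨S, hScard, hSnull, hScov⟩
      set G : ℝ → ℝ := myQuant ν with hG_def
      set h : ℝ → P := fun x =>
        if hx : Int.fract x ∈ Set.Ioo (0:ℝ) 1 ∧ G (Int.fract x) ∈ s then
          e.symm ⟨G (Int.fract x), hx.2⟩
        else hPne.some with hh_def
      have hnull : ∀ N : Set P, MeasurableSet N → μ N = 0 → volume (h ⁻¹' N) = 0 := by
        intro N hNmeas hN0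
        set B : Set ℝ := sᶜ ∪ (φ '' N) with hB_def
        have hBmeas : MeasurableSet B := hs.compl.union (himg N hNmeas)
        have hB0 : ν B = 0 := measure_union_null hνs (by rw [himg2 N hNmeas]; exact hN0)
        set Base : Set ℝ := G ⁻¹' B ∩ Set.Ioo 0 1 with hBase_def
        have hBase0 : volume Base = 0 := by
          rw [hBase_def, ← Measure.restrict_apply' measurableSet_Ioo,
            ← Measure.map_apply_of_aemeasurable myQuant_aemeasurable hBmeas,
            my_map_quant hν, hB0]
        have hsub : h ⁻¹' N ⊆
            (⋃ n : ℤ, (fun t => t + (n:ℝ)) '' Base) ∪ (⋃ n : ℤ, {(n:ℝ)}) := by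
          intro x hx
          by_cases hfr : Int.fract x ∈ Set.Ioo (0:ℝ) 1
          · left
            refine Set.mem_iUnion.mpr ⟨⌊x⌋, Int.fract x, ⟨?_, hfr⟩, ?_⟩
            · by_cases hgs : G (Int.fract x) ∈ s
              · right
                have hhx : h x = e.symm ⟨G (Int.fract x), hgs⟩ := by
                  simp only [hh_def]
                  exact dif_pos ⟨hfr, hgs⟩
                have hmem : e.symm ⟨G (Int.fract x), hgs⟩ ∈ N := by
                  rw [← hhx]; exact hx
                refine ⟨e.symm ⟨G (Int.fract x), hgs⟩, hmem, ?_⟩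
                rw [hφ_def]
                simp
              · left; exact hgs
            · rw [Int.fract]; ring
          · right
            have h0 : Int.fract x = 0 := by
              have h1 := Int.fract_nonneg x
              have h2 := Int.fract_lt_one x
              rcases eq_or_lt_of_le h1 with heq | hlt
              · exact heq.symm
              · exact absurd ⟨hlt, h2⟩ hfr
            refine Set.mem_iUnion.mpr ⟨⌊x⌋, ?_⟩
            have hxf : x = (⌊x⌋ : ℝ) := by
              have := Int.fract x
              rw [Int.fract] at h0
              linarith [h0]
            exact Set.mem_singleton_iff.mpr hxf
        refine measure_mono_null hsub (measure_union_null ?_ ?_)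
        · refine measure_iUnion_null fun n => ?_
          have himgeq : (fun t => t + (n:ℝ)) '' Base = (fun t => t + (-(n:ℝ))) ⁻¹' Base := by
            ext y
            simp only [Set.mem_image, Set.mem_preimage]
            constructor
            · rintro ⟨t, ht, rfl⟩
              simpa using ht
            · intro hy
              exact ⟨y + -(n:ℝ), hy, by ring⟩
          rw [himgeq, measure_preimage_add_right]
          exact hBase0
        · exact measure_iUnion_null fun n => measure_singleton _
      refine le_trans (csInf_le' ⟨(fun A => h ⁻¹' A) '' S, rfl, ?_, ?_⟩) ?_
      · rintro A' ⟨A, hA, rfl⟩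
        obtain ⟨NA, hNAmeas, hANA, hNA0⟩ := hSnull A hA
        exact measure_mono_null (Set.preimage_mono hANA) (hnull NA hNAmeas hNA0)
      · ext x
        simp only [Set.sUnion_image, Set.mem_iUnion, Set.mem_preimage, Set.mem_univ, iff_true,
          exists_prop]
        have h3 : h x ∈ ⋃₀ S := by rw [hScov]; exact Set.mem_univ _
        obtain ⟨A, hA, hxA⟩ := h3
        exact ⟨A, hA, hxA⟩
      · rw [← hScard]
        exact mk_image_le
end

section
/- If S ⊆ ℝ is universally measurable and does not have the Baire property, then for every set P ⊆ ℝ × ℝ with the Baire property, the symmetric difference (S × ℝ) △ P is not universally null. -/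
open MeasureTheory

section Aux

variable {X : Type*} [TopologicalSpace X]

/-- A closed set with empty interior is meagre. -/
lemma aux_closed_isMeagre {s : Set X} (hc : IsClosed s) (hi : interior s = ∅) :
    IsMeagre s :=
  residual_of_dense_open hc.isOpen_compl (interior_eq_empty_iff_dense_compl.mp hi)

/-- A countable union of meagre sets is meagre. -/
lemma aux_isMeagre_iUnion {ι : Sort*} [Countable ι] {f : ι → Set X}
    (h : ∀ i, IsMeagre (f i)) : IsMeagre (⋃ i, f i) := by
  rw [IsMeagre, Set.compl_iUnion]
  exact countable_iInter_mem.mpr h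

lemma aux_isMeagre_biUnion {ι : Type*} {s : Set ι} (hs : s.Countable) {f : ι → Set X}
    (h : ∀ i ∈ s, IsMeagre (f i)) : IsMeagre (⋃ i ∈ s, f i) := by
  rw [IsMeagre, Set.compl_iUnion₂]
  exact (countable_bInter_mem hs).mpr h

lemma aux_isMeagre_union {s t : Set X} (hs : IsMeagre s) (ht : IsMeagre t) :
    IsMeagre (s ∪ t) := by
  rw [IsMeagre, Set.compl_union]
  exact Filter.inter_mem hs ht

/-- In ℝ, a countable set is meagre. -/
lemma aux_countable_isMeagre {s : Set ℝ} (h : s.Countable) : IsMeagre s := by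
  have : s ⊆ ⋃ x ∈ s, {x} := by simp
  refine IsMeagre.mono this ?_
  refine aux_isMeagre_biUnion h (fun x _ => ?_)
  refine aux_closed_isMeagre isClosed_singleton ?_
  simpa using interior_singleton x

/-- A nonempty open subset of ℝ is not meagre. -/
lemma aux_open_not_isMeagre {V : Set ℝ} (hV : IsOpen V) (hne : V.Nonempty)
    (h : IsMeagre V) : False := by
  have hd : Dense Vᶜ := dense_of_mem_residual h
  obtain ⟨x, hx1, hx2⟩ := hd.inter_open_nonempty V hV hne
  exact hx2 hx1

/-- Easy direction of Kuratowski–Ulam for a closed nowhere dense set. -/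
lemma aux_ku_closed {F : Set (ℝ × ℝ)} (hF : IsClosed F) (hI : interior F = ∅) :
    ∃ C ∈ residual ℝ, ∀ x ∈ C, IsMeagre {y | (x, y) ∈ F} := by
  set A : ℚ × ℚ → Set ℝ := fun p =>
    if ((p.1 : ℝ) < (p.2 : ℝ)) then ⋂ y ∈ Set.Ioo (p.1 : ℝ) (p.2 : ℝ), {x | (x, y) ∈ F}
    else ∅ with hA
  have hAm : ∀ p, IsMeagre (A p) := by
    intro p
    rw [hA]
    dsimp only
    split_ifs with hpq
    · refine aux_closed_isMeagre ?_ ?_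
      · refine isClosed_biInter (fun y _ => ?_)
        exact hF.preimage (continuous_id.prodMk continuous_const)
      · by_contra hne
        obtain ⟨x, hx⟩ := Set.nonempty_iff_ne_empty.mpr hne
        set B := ⋂ y ∈ Set.Ioo (p.1 : ℝ) (p.2 : ℝ), {x | (x, y) ∈ F}
        have hK : (interior B) ×ˢ Set.Ioo (p.1 : ℝ) (p.2 : ℝ) ⊆ F := by
          rintro ⟨a, b⟩ ⟨ha, hb⟩
          have := interior_subset ha
          simp only [B, Set.mem_iInter] at this
          exact this b hb
        have hKo : IsOpen ((interior B) ×ˢ Set.Ioo (p.1 : ℝ) (p.2 : ℝ)) :=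
          isOpen_interior.prod isOpen_Ioo
        have hKsub : (interior B) ×ˢ Set.Ioo (p.1 : ℝ) (p.2 : ℝ) ⊆ interior F :=
          hKo.subset_interior_iff.mpr hK
        rw [hI, Set.subset_empty_iff] at hKsub
        obtain ⟨b, hb⟩ := Set.nonempty_Ioo.mpr hpq
        have hmem : ((x, b) : ℝ × ℝ) ∈ (interior B) ×ˢ Set.Ioo (p.1 : ℝ) (p.2 : ℝ) := ⟨hx, hb⟩
        rw [hKsub] at hmem
        exact hmem
    · exact IsMeagre.empty
  refine ⟨(⋃ p, A p)ᶜ, ?_, ?_⟩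
  · have : IsMeagre (⋃ p, A p) := aux_isMeagre_iUnion hAm
    exact this
  · intro x hx
    have hFx : IsClosed {y : ℝ | (x, y) ∈ F} :=
      hF.preimage (continuous_const.prodMk continuous_id)
    rcases Set.eq_empty_or_nonempty (interior {y : ℝ | (x, y) ∈ F}) with h0 | ⟨y, hy⟩
    · exact aux_closed_isMeagre hFx h0
    · exfalso
      have hnhds : {y : ℝ | (x, y) ∈ F} ∈ nhds y :=
        mem_interior_iff_mem_nhds.mp hy
      obtain ⟨l, u, hylu, hsub⟩ := mem_nhds_iff_exists_Ioo_subset.mp hnhds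
      obtain ⟨q, hq1, hq2⟩ := exists_rat_btwn hylu.1
      obtain ⟨r, hr1, hr2⟩ := exists_rat_btwn hylu.2
      have hqr : (q : ℝ) < (r : ℝ) := hq2.trans hr1
      apply hx
      refine Set.mem_iUnion.mpr ⟨(q, r), ?_⟩
      rw [hA]
      dsimp only
      rw [if_pos hqr]
      refine Set.mem_iInter₂.mpr (fun y' hy' => ?_)
      exact hsub ⟨hq1.trans hy'.1, hy'.2.trans hr2⟩

/-- Easy direction of Kuratowski–Ulam: a meagre set in the plane has meagre vertical sections
for a residual set of first coordinates. -/
lemma aux_ku {M : Set (ℝ × ℝ)} (hM : IsMeagre M) :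
    ∃ C ∈ residual ℝ, ∀ x ∈ C, IsMeagre {y | (x, y) ∈ M} := by
  obtain ⟨SS, hnwd, hct, hsub⟩ := isMeagre_iff_countable_union_isNowhereDense.mp hM
  have key : ∀ t ∈ SS, ∃ C ∈ residual ℝ, ∀ x ∈ C, IsMeagre {y | (x, y) ∈ closure t} := by
    intro t ht
    exact aux_ku_closed isClosed_closure (hnwd t ht)
  choose! C hC1 hC2 using key
  refine ⟨⋂ t ∈ SS, C t, (countable_bInter_mem hct).mpr hC1, ?_⟩
  intro x hx
  have hxC : ∀ t ∈ SS, x ∈ C t := by simpa [Set.mem_iInter₂] using hx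
  have hsec : {y : ℝ | (x, y) ∈ M} ⊆ ⋃ t ∈ SS, {y : ℝ | (x, y) ∈ closure t} := by
    intro y hy
    obtain ⟨t, ht, hyt⟩ := hsub hy
    exact Set.mem_iUnion₂.mpr ⟨t, ht, subset_closure hyt⟩
  refine IsMeagre.mono hsec ?_
  exact aux_isMeagre_biUnion hct (fun t ht => hC2 t ht x (hxC t ht))

/-- Any set containing the intersection of a nonempty open set with a residual set supports an
atomless probability measure. -/
lemma aux_exists_measure {V : Set ℝ} (hV : IsOpen V) (hne : V.Nonempty) {T : Set ℝ}
    (hT : T ∈ residual ℝ) :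
    ∃ μ : Measure ℝ, IsProbabilityMeasure μ ∧ (∀ y : ℝ, μ {y} = 0) ∧
      ∀ N : Set ℝ, MeasurableSet N → V ∩ T ⊆ N → μ N = 1 := by
  obtain ⟨SS, hSo, hSd, hSc, hSsub⟩ := mem_residual_iff.mp hT
  set G := ⋂₀ SS with hG
  have hGδ : IsGδ G := ⟨SS, hSo, hSc, rfl⟩
  have hGres : G ∈ residual ℝ :=
    (countable_sInter_mem hSc).mpr fun t ht => residual_of_dense_open (hSo t ht) (hSd t ht)
  set H := V ∩ G with hH
  have hHmeas : MeasurableSet H := hV.measurableSet.inter hGδ.measurableSet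
  have hHsub : H ⊆ V ∩ T := Set.inter_subset_inter_right V hSsub
  -- H is uncountable
  have hHunc : ¬ H.Countable := by
    intro hcnt
    refine aux_open_not_isMeagre hV hne ((?_ : IsMeagre (H ∪ Gᶜ)).mono (?_ : V ⊆ H ∪ Gᶜ))
    · refine aux_isMeagre_union (aux_countable_isMeagre hcnt) ?_
      show Gᶜᶜ ∈ residual ℝ
      rwa [compl_compl]
    · intro x hxV
      by_cases hxG : x ∈ G
      · exact Or.inl ⟨hxV, hxG⟩
      · exact Or.inr hxG
  haveI : StandardBorelSpace ↥H := hHmeas.standardBorel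
  have hHunc' : ¬ Countable ↥H := by rwa [Set.countable_coe_iff]
  let e : ℝ ≃ᵐ ↥H := PolishSpace.measurableEquivOfNotCountable not_countable hHunc'
  set f : ℝ → ℝ := fun r => ((e r : ↥H) : ℝ) with hf
  have hfm : Measurable f := measurable_subtype_coe.comp e.measurable
  have hfinj : Function.Injective f :=
    Subtype.val_injective.comp e.injective
  have hfH : ∀ r, f r ∈ H := fun r => (e r).2
  set ν : Measure ℝ := volume.restrict (Set.Ioo (0 : ℝ) 1) with hν
  have hν1 : ν Set.univ = 1 := by
    rw [hν, Measure.restrict_apply_univ, Real.volume_Ioo]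
    norm_num
  refine ⟨ν.map f, ?_, ?_, ?_⟩
  · constructor
    rw [Measure.map_apply hfm MeasurableSet.univ, Set.preimage_univ, hν1]
  · intro y
    rw [Measure.map_apply hfm (measurableSet_singleton y)]
    have hsub : (f ⁻¹' {y}).Subsingleton := by
      intro a ha b hb
      simp only [Set.mem_preimage, Set.mem_singleton_iff] at ha hb
      exact hfinj (ha.trans hb.symm)
    exact hsub.measure_zero ν
  · intro N hN hsubN
    rw [Measure.map_apply hfm hN]
    have : f ⁻¹' N = Set.univ := by
      refine Set.eq_univ_of_forall (fun r => ?_)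
      exact hsubN (hHsub (hfH r))
    rw [this, hν1]

end Aux

/-- If `S ⊆ ℝ` is universally measurable and does not have the Baire property, then for every set
`P ⊆ ℝ × ℝ` with the Baire property, the symmetric difference `(S × ℝ) △ P` is not universally
null. -/
theorem stmt10 (S : Set ℝ)
    (hum : ∀ μ : Measure ℝ, SigmaFinite μ →
      ∃ B N : Set ℝ, MeasurableSet B ∧ MeasurableSet N ∧ μ N = 0 ∧ symmDiff S B ⊆ N)
    (hnbp : ¬ ∃ U : Set ℝ, IsOpen U ∧ IsMeagre (symmDiff S U)) :
    ∀ P : Set (ℝ × ℝ), (∃ U : Set (ℝ × ℝ), IsOpen U ∧ IsMeagre (symmDiff P U)) →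
      ¬ (∀ μ : Measure (ℝ × ℝ), SigmaFinite μ → (∀ p : ℝ × ℝ, μ {p} = 0) →
          ∃ N : Set (ℝ × ℝ), MeasurableSet N ∧
            symmDiff (S ×ˢ (Set.univ : Set ℝ)) P ⊆ N ∧ μ N = 0) := by
  rintro P ⟨U, hU, hPU⟩ hnull
  -- the key contradiction machine
  have key : ∀ (x : ℝ) (V T : Set ℝ), IsOpen V → V.Nonempty → T ∈ residual ℝ →
      (∀ y ∈ V ∩ T, (x, y) ∈ symmDiff (S ×ˢ (Set.univ : Set ℝ)) P) → False := by
    intro x V T hV hne hT hsub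
    obtain ⟨μ, hprob, hatom, hfull⟩ := aux_exists_measure hV hne hT
    set μ₂ : Measure (ℝ × ℝ) := μ.map (Prod.mk x) with hμ₂
    haveI : IsProbabilityMeasure μ₂ :=
      Measure.isProbabilityMeasure_map measurable_prodMk_left.aemeasurable
    have hatom₂ : ∀ p : ℝ × ℝ, μ₂ {p} = 0 := by
      intro p
      rw [hμ₂, Measure.map_apply measurable_prodMk_left (measurableSet_singleton p)]
      refine measure_mono_null ?_ (hatom p.2)
      intro y hy
      simp only [Set.mem_preimage, Set.mem_singleton_iff] at hy
      simp [← hy]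
    obtain ⟨N, hNm, hNsub, hN0⟩ := hnull μ₂ inferInstance hatom₂
    have hNx : MeasurableSet (Prod.mk x ⁻¹' N) := measurable_prodMk_left hNm
    have h1 : μ (Prod.mk x ⁻¹' N) = 1 := by
      refine hfull _ hNx ?_
      intro y hy
      exact hNsub (hsub y hy)
    have h0 : μ (Prod.mk x ⁻¹' N) = 0 := by
      rw [← Measure.map_apply measurable_prodMk_left hNm, ← hμ₂, hN0]
    rw [h0] at h1
    exact one_ne_zero h1.symm
  -- the sections of the meagre set symmDiff P U are meagre on a residual set
  obtain ⟨C, hC, hCx⟩ := aux_ku hPU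
  apply hnbp
  refine ⟨Prod.fst '' U, isOpenMap_fst U hU, ?_⟩
  have hCc : IsMeagre Cᶜ := by
    show Cᶜᶜ ∈ residual ℝ
    rwa [compl_compl]
  refine IsMeagre.mono ?_ hCc
  intro x hx
  simp only [Set.mem_compl_iff]
  intro hxC
  have hMx : IsMeagre {y : ℝ | (x, y) ∈ symmDiff P U} := hCx x hxC
  have hTres : {y : ℝ | (x, y) ∈ symmDiff P U}ᶜ ∈ residual ℝ := hMx
  rcases Set.mem_symmDiff.mp hx with ⟨hxS, hxW⟩ | ⟨hxW, hxS⟩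
  · -- x ∈ S, x ∉ fst '' U : every section of U at x is empty
    have hUx : ∀ y : ℝ, (x, y) ∉ U := fun y hy => hxW ⟨(x, y), hy, rfl⟩
    refine key x Set.univ _ isOpen_univ Set.univ_nonempty hTres ?_
    rintro y ⟨-, hyT⟩
    simp only [Set.mem_compl_iff, Set.mem_setOf_eq, Set.mem_symmDiff] at hyT
    push_neg at hyT
    have hyP : (x, y) ∉ P := fun h => hUx y (hyT.1 h)
    exact Set.mem_symmDiff.mpr (Or.inl ⟨⟨hxS, Set.mem_univ y⟩, hyP⟩)
  · -- x ∉ S, x ∈ fst '' U : the section of U at x is open nonempty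
    obtain ⟨p, hpU, hpx⟩ := hxW
    have hVo : IsOpen {y : ℝ | (x, y) ∈ U} :=
      hU.preimage (continuous_const.prodMk continuous_id)
    have hVne : {y : ℝ | (x, y) ∈ U}.Nonempty := by
      refine ⟨p.2, ?_⟩
      show (x, p.2) ∈ U
      have : (x, p.2) = p := by
        ext <;> simp [← hpx]
      rwa [this]
    refine key x _ _ hVo hVne hTres ?_
    rintro y ⟨hyU, hyT⟩
    simp only [Set.mem_compl_iff, Set.mem_setOf_eq, Set.mem_symmDiff] at hyT
    push_neg at hyT
    have hyP : (x, y) ∈ P := hyT.2 hyU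
    have hyS : (x, y) ∉ S ×ˢ (Set.univ : Set ℝ) := fun h => hxS h.1
    exact Set.mem_symmDiff.mpr (Or.inr ⟨hyP, hyS⟩)
end

section
/- Every universally null subset of ℝ that has the Baire property is meager. -/
open MeasureTheory Set

/-- A countable subset of `ℝ` is meagre. -/
lemma countable_isMeagre {s : Set ℝ} (hs : s.Countable) : IsMeagre s := by
  rw [isMeagre_iff_countable_union_isNowhereDense]
  refine ⟨(fun x => ({x} : Set ℝ)) '' s, ?_, hs.image _, ?_⟩
  · rintro t ⟨x, -, rfl⟩
    simp [IsNowhereDense, closure_singleton, interior_singleton]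
  · intro x hx
    exact ⟨{x}, ⟨x, hx, rfl⟩, rfl⟩

/-- Every universally null subset of `ℝ` that has the Baire property is meager. -/
theorem stmt13 (A : Set ℝ)
    (hnull : ∀ μ : Measure ℝ, SigmaFinite μ → (∀ x : ℝ, μ {x} = 0) →
      ∃ N : Set ℝ, MeasurableSet N ∧ A ⊆ N ∧ μ N = 0)
    (hbp : ∃ U : Set ℝ, IsOpen U ∧ IsMeagre (symmDiff A U)) :
    IsMeagre A := by
  obtain ⟨U, hUopen, hUM⟩ := hbp
  rcases U.eq_empty_or_nonempty with rfl | hUne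
  · simpa [symmDiff_def] using hUM
  · exfalso
    obtain ⟨S, hSnd, hScount, hSsub⟩ :=
      isMeagre_iff_countable_union_isNowhereDense.mp hUM
    set F : Set ℝ := ⋃₀ (closure '' S) with hF
    have hFmeas : MeasurableSet F :=
      MeasurableSet.sUnion (hScount.image _)
        (by rintro t ⟨s, -, rfl⟩; exact isClosed_closure.measurableSet)
    set G : Set ℝ := U \ F with hGdef
    have hGmeas : MeasurableSet G := hUopen.measurableSet.diff hFmeas
    have hsubF : ⋃₀ S ⊆ F := sUnion_mono_subsets fun s => subset_closure
    have hGsub : G ⊆ A := by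
      rintro x ⟨hxU, hxF⟩
      by_contra hxA
      exact hxF (hsubF (hSsub (by simp [symmDiff_def, hxU, hxA])))
    -- F is meagre
    have hFmeagre : IsMeagre F := by
      rw [isMeagre_iff_countable_union_isNowhereDense]
      refine ⟨closure '' S, ?_, hScount.image _, subset_rfl⟩
      rintro t ⟨s, hs, rfl⟩
      exact (hSnd s hs).closure
    -- G is uncountable
    have hGuncount : ¬ Countable G := by
      intro hc
      have hGm : IsMeagre G := countable_isMeagre (countable_coe_iff.mp hc)
      have hUm : IsMeagre U := by
        have : U ⊆ G ∪ F := fun x hx => by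
          by_cases hxF : x ∈ F
          · exact Or.inr hxF
          · exact Or.inl ⟨hx, hxF⟩
        refine IsMeagre.mono this ?_
        rw [IsMeagre, compl_union]
        exact Filter.inter_mem hGm hFmeagre
      have : Dense (Uᶜ) := dense_of_mem_residual hUm
      obtain ⟨x, hx⟩ := hUne
      obtain ⟨y, hy, hyU⟩ := mem_closure_iff.mp (this x) U hUopen hx
      exact hyU hy
    haveI : StandardBorelSpace G := hGmeas.standardBorel
    have hRuncount : ¬ Countable ℝ := fun h =>
      Cardinal.not_countable_real Set.countable_univ
    let e : ℝ ≃ᵐ G := PolishSpace.measurableEquivOfNotCountable hRuncount hGuncount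
    let φ : ℝ → ℝ := fun x => (e x : ℝ)
    have hφmeas : Measurable φ := measurable_subtype_coe.comp e.measurable
    have hφinj : Function.Injective φ :=
      Subtype.val_injective.comp e.injective
    set ν : Measure ℝ := volume.restrict (Icc (0:ℝ) 1) with hν
    set μ : Measure ℝ := Measure.map φ ν with hμ
    haveI : IsFiniteMeasure ν := by
      constructor
      rw [hν, Measure.restrict_apply_univ]
      simp [Real.volume_Icc]
    haveI : IsFiniteMeasure μ := by
      constructor
      rw [hμ, Measure.map_apply hφmeas MeasurableSet.univ]
      exact measure_lt_top ν _
    have hatomless : ∀ x : ℝ, μ {x} = 0 := by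
      intro x
      rw [hμ, Measure.map_apply hφmeas (measurableSet_singleton x)]
      have hss : (φ ⁻¹' {x}).Subsingleton := fun a ha b hb => hφinj (by
        simp only [mem_preimage, mem_singleton_iff] at ha hb
        rw [ha, hb])
      have : ν (φ ⁻¹' {x}) ≤ volume (φ ⁻¹' {x}) :=
        Measure.restrict_le_self _
      rw [hss.measure_zero volume] at this
      exact le_antisymm this zero_le
    obtain ⟨N, hNmeas, hAN, hN0⟩ := hnull μ inferInstance hatomless
    have hpre : φ ⁻¹' N = univ :=
      eq_univ_of_forall fun x => hAN (hGsub (e x).2)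
    have : μ N = 1 := by
      rw [hμ, Measure.map_apply hφmeas hNmeas, hpre, hν,
        Measure.restrict_apply_univ]
      simp [Real.volume_Icc]
    rw [hN0] at this
    exact zero_ne_one this
end

section
/- Suppose that cov(M) = cof(M). Then there exists a universally null subset of ℝ that is not meager. -/
open MeasureTheory Cardinal

/-- `cov(M)`: the least cardinality of a family of meager subsets of `ℝ` whose union is `ℝ`. -/
noncomputable def covMeager : Cardinal :=
  sInf { c : Cardinal | ∃ S : Set (Set ℝ),
    #S = c ∧ (∀ A ∈ S, IsMeagre A) ∧ ⋃₀ S = Set.univ }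

/-- `cof(M)`: the least cardinality of a family `D` of meager subsets of `ℝ` such that every
meager subset of `ℝ` is contained in some member of `D`. -/
noncomputable def cofMeager : Cardinal :=
  sInf { c : Cardinal | ∃ D : Set (Set ℝ),
    #D = c ∧ (∀ A ∈ D, IsMeagre A) ∧ ∀ M : Set ℝ, IsMeagre M → ∃ A ∈ D, M ⊆ A }

section Aux

open Set Filter Topology
open scoped ENNReal NNReal

namespace Stmt15Aux

lemma not_isMeagre_univ' : ¬ IsMeagre (univ : Set ℝ) := by
  intro h
  have : Dense (∅ : Set ℝ) := dense_of_mem_residual (by simpa [IsMeagre] using h)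
  simpa using this.nonempty

lemma isMeagre_singleton' (x : ℝ) : IsMeagre ({x} : Set ℝ) := by
  have : ({x}ᶜ : Set ℝ) ∈ residual ℝ :=
    residual_of_dense_open isClosed_singleton.isOpen_compl (dense_compl_singleton x)
  simpa [IsMeagre] using this

lemma covMeager_le {S : Set (Set ℝ)} (hm : ∀ A ∈ S, IsMeagre A) (hu : ⋃₀ S = Set.univ) :
    covMeager ≤ #S :=
  csInf_le (OrderBot.bddBelow _) ⟨S, rfl, hm, hu⟩

lemma sUnion_ne_univ {S : Set (Set ℝ)} (hm : ∀ A ∈ S, IsMeagre A) (hS : #S < covMeager) :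
    ∃ t : ℝ, ∀ A ∈ S, t ∉ A := by
  by_contra hcon
  push_neg at hcon
  have hu : ⋃₀ S = Set.univ := by
    ext t; simp only [mem_univ, iff_true, mem_sUnion]
    obtain ⟨A, hA, htA⟩ := hcon t
    exact ⟨A, hA, htA⟩
  exact absurd (covMeager_le hm hu) (not_le.mpr hS)

lemma aleph0_le_covMeager : ℵ₀ ≤ covMeager := by
  refine le_csInf ⟨𝔠, Set.range (fun x : ℝ => ({x} : Set ℝ)), ?_, ?_, ?_⟩ ?_
  · rw [Cardinal.mk_range_eq _ (fun a b hab => ?_), Cardinal.mk_real]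
    simpa using hab
  · rintro A ⟨x, rfl⟩; exact isMeagre_singleton' x
  · ext t; simp
  · rintro c ⟨S, rfl, hm, hu⟩
    by_contra hlt
    push_neg at hlt
    have hSc : S.Countable := by
      rw [← Set.countable_coe_iff, ← Cardinal.mk_le_aleph0_iff]
      exact le_of_lt hlt
    have hmg : IsMeagre (⋃₀ S) := by
      have : (⋃₀ S)ᶜ ∈ residual ℝ := by
        rw [Set.compl_sUnion]
        exact (countable_sInter_mem (hSc.image compl)).mpr
          (by rintro t ⟨A, hA, rfl⟩; exact hm A hA)
      exact this
    rw [hu] at hmg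
    exact not_isMeagre_univ' hmg

variable {μ : Measure ℝ} [IsFiniteMeasure μ]

section
variable (μ)
noncomputable def Fcdf : ℝ → ℝ := fun x => (μ (Set.Iic x)).toReal
end

lemma Fcdf_mono : Monotone (Fcdf μ) := fun x y hxy =>
  ENNReal.toReal_mono (measure_ne_top μ _) (measure_mono (Set.Iic_subset_Iic.mpr hxy))

lemma Fcdf_nonneg (x : ℝ) : 0 ≤ Fcdf μ x := ENNReal.toReal_nonneg

lemma ofReal_Fcdf (x : ℝ) : ENNReal.ofReal (Fcdf μ x) = μ (Set.Iic x) :=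
  ENNReal.ofReal_toReal (measure_ne_top μ _)

lemma measure_le_cdf_le (hat : ∀ x : ℝ, μ {x} = 0) {b : ℝ} : μ {x | Fcdf μ x ≤ b} ≤ ENNReal.ofReal b := by
  set L := {x | Fcdf μ x ≤ b} with hL
  rcases Set.eq_empty_or_nonempty L with hLe | ⟨l₀, hl₀⟩
  · simp [hLe]
  have hlower : ∀ y l, l ∈ L → y ≤ l → y ∈ L :=
    fun y l hl hyl => le_trans (Fcdf_mono hyl) hl
  by_cases hbdd : BddAbove L
  · set c := sSup L with hc
    have hmem : ∀ y, y < c → y ∈ L := by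
      intro y hy
      obtain ⟨l, hl, hyl⟩ := exists_lt_of_lt_csSup ⟨l₀, hl₀⟩ hy
      exact hlower y l hl hyl.le
    have hLsub : L ⊆ Set.Iic c := fun l hl => le_csSup hbdd hl
    have hIio : μ (Set.Iio c) ≤ ENNReal.ofReal b := by
      have hU : (⋃ n : ℕ, Set.Iic (c - 1/(n+1))) = Set.Iio c := by
        ext y
        simp only [Set.mem_iUnion, Set.mem_Iic, Set.mem_Iio]
        constructor
        · rintro ⟨n, hn⟩
          have : (0:ℝ) < 1/(n+1) := by positivity
          linarith
        · intro hy
          obtain ⟨n, hn⟩ := exists_nat_one_div_lt (sub_pos.mpr hy)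
          exact ⟨n, by linarith⟩
      have hmono : Monotone (fun n : ℕ => Set.Iic (c - 1/(n+1))) := by
        intro n m hnm
        apply Set.Iic_subset_Iic.mpr
        have hc' : (n:ℝ) ≤ m := Nat.cast_le.mpr hnm
        have : (1:ℝ)/(m+1) ≤ 1/(n+1) := by
          apply one_div_le_one_div_of_le (by positivity)
          linarith
        linarith
      have := tendsto_measure_iUnion_atTop (μ := μ) hmono
      rw [hU] at this
      refine le_of_tendsto this (Filter.Eventually.of_forall fun n => ?_)
      have h1 : (0:ℝ) < 1/(n+1) := by positivity
      have : c - 1/(n+1) ∈ L := hmem _ (by linarith)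
      calc (μ ∘ fun n : ℕ => Set.Iic (c - 1/(n+1))) n = ENNReal.ofReal (Fcdf μ (c - 1/(n+1))) :=
            (ofReal_Fcdf _).symm
        _ ≤ ENNReal.ofReal b := ENNReal.ofReal_le_ofReal this
    calc μ L ≤ μ (Set.Iic c) := measure_mono hLsub
      _ ≤ μ (Set.Iio c) + μ {c} := by
          rw [← Set.Iio_union_right (a := c)] ; exact measure_union_le _ _
      _ = μ (Set.Iio c) := by rw [hat c, add_zero]
      _ ≤ ENNReal.ofReal b := hIio
  · -- L unbounded above: μ univ ≤ ofReal b
    have huniv : μ Set.univ ≤ ENNReal.ofReal b := by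
      have hU : (⋃ n : ℕ, Set.Iic ((n:ℝ))) = Set.univ := by
        ext y; simp only [Set.mem_iUnion, Set.mem_Iic, Set.mem_univ, iff_true]
        obtain ⟨n, hn⟩ := exists_nat_ge y
        exact ⟨n, hn⟩
      have hmono : Monotone (fun n : ℕ => Set.Iic ((n:ℝ))) := fun n m hnm =>
        Set.Iic_subset_Iic.mpr (by exact_mod_cast hnm)
      have := tendsto_measure_iUnion_atTop (μ := μ) hmono
      rw [hU] at this
      refine le_of_tendsto this (Filter.Eventually.of_forall fun n => ?_)
      obtain ⟨l, hl, hnl⟩ : ∃ l ∈ L, (n:ℝ) < l := by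
        rcases not_bddAbove_iff.mp hbdd (n:ℝ) with ⟨l, hl, hnl⟩
        exact ⟨l, hl, hnl⟩
      calc (μ ∘ fun n : ℕ => Set.Iic ((n:ℝ))) n ≤ μ (Set.Iic l) :=
            measure_mono (Set.Iic_subset_Iic.mpr hnl.le)
        _ = ENNReal.ofReal (Fcdf μ l) := (ofReal_Fcdf _).symm
        _ ≤ ENNReal.ofReal b := ENNReal.ofReal_le_ofReal hl
    exact le_trans (measure_mono (Set.subset_univ L)) huniv

lemma measure_le_cdf_ge (hat : ∀ x : ℝ, μ {x} = 0) {a : ℝ} (ha : 0 ≤ a)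
    (hK : {x | a < Fcdf μ x}.Nonempty) : ENNReal.ofReal a ≤ μ {x | Fcdf μ x ≤ a} := by
  set K := {x | a < Fcdf μ x} with hKdef
  set L := {x | Fcdf μ x ≤ a} with hLdef
  by_cases hbdd : BddBelow K
  · set c := sInf K with hc
    have hIio : Set.Iio c ⊆ L := by
      intro y hy
      by_contra hyL
      have : y ∈ K := by simpa [hKdef, hLdef, not_le] using hyL
      exact absurd (csInf_le hbdd this) (not_le.mpr hy)
    have hIic : ENNReal.ofReal a ≤ μ (Set.Iic c) := by
      have hI : (⋂ n : ℕ, Set.Iic (c + 1/(n+1))) = Set.Iic c := by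
        ext y
        simp only [Set.mem_iInter, Set.mem_Iic]
        constructor
        · intro hy
          by_contra hyc
          push_neg at hyc
          obtain ⟨n, hn⟩ := exists_nat_one_div_lt (sub_pos.mpr hyc)
          exact absurd (hy n) (by push_neg; linarith)
        · intro hy n
          have : (0:ℝ) < 1/(n+1) := by positivity
          linarith
      have hanti : Antitone (fun n : ℕ => Set.Iic (c + 1/(n+1))) := by
        intro n m hnm
        apply Set.Iic_subset_Iic.mpr
        have hc' : (n:ℝ) ≤ m := Nat.cast_le.mpr hnm
        have : (1:ℝ)/(m+1) ≤ 1/(n+1) := by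
          apply one_div_le_one_div_of_le (by positivity)
          linarith
        linarith
      have htend := tendsto_measure_iInter_atTop (μ := μ)
        (fun n => (measurableSet_Iic).nullMeasurableSet) hanti ⟨0, measure_ne_top μ _⟩
      rw [hI] at htend
      refine ge_of_tendsto htend (Filter.Eventually.of_forall fun n => ?_)
      obtain ⟨k, hk, hkc⟩ := exists_lt_of_csInf_lt hK (show c < c + 1/(n+1) by
        have : (0:ℝ) < 1/(n+1) := by positivity
        linarith)
      calc ENNReal.ofReal a ≤ ENNReal.ofReal (Fcdf μ k) := ENNReal.ofReal_le_ofReal hk.le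
        _ = μ (Set.Iic k) := ofReal_Fcdf _
        _ ≤ (μ ∘ fun n : ℕ => Set.Iic (c + 1/(n+1))) n :=
            measure_mono (Set.Iic_subset_Iic.mpr hkc.le)
    have heq : μ (Set.Iic c) = μ (Set.Iio c) := by
      rw [← Set.Iio_union_right (a := c)]
      refine le_antisymm ?_ (measure_mono Set.subset_union_left)
      calc μ (Set.Iio c ∪ {c}) ≤ μ (Set.Iio c) + μ {c} := measure_union_le _ _
        _ = μ (Set.Iio c) := by rw [hat c, add_zero]
    calc ENNReal.ofReal a ≤ μ (Set.Iic c) := hIic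
      _ = μ (Set.Iio c) := heq
      _ ≤ μ L := measure_mono hIio
  · -- K unbounded below: all F y > a, so a = 0
    have hall : ∀ y : ℝ, a < Fcdf μ y := by
      intro y
      rcases not_bddBelow_iff.mp hbdd y with ⟨k, hk, hky⟩
      exact lt_of_lt_of_le hk (Fcdf_mono hky.le)
    have h0 : ENNReal.ofReal a ≤ 0 := by
      have hI : (⋂ n : ℕ, Set.Iic (-(n:ℝ))) = ∅ := by
        ext y
        simp only [Set.mem_iInter, Set.mem_Iic, Set.mem_empty_iff_false, iff_false, not_forall,
          not_le]
        obtain ⟨n, hn⟩ := exists_nat_gt (-y)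
        exact ⟨n, by linarith⟩
      have hanti : Antitone (fun n : ℕ => Set.Iic (-(n:ℝ))) := fun n m hnm =>
        Set.Iic_subset_Iic.mpr (neg_le_neg (Nat.cast_le.mpr hnm))
      have htend := tendsto_measure_iInter_atTop (μ := μ)
        (fun n => (measurableSet_Iic).nullMeasurableSet) hanti ⟨0, measure_ne_top μ _⟩
      rw [hI, measure_empty] at htend
      refine ge_of_tendsto htend (Filter.Eventually.of_forall fun n => ?_)
      calc ENNReal.ofReal a ≤ ENNReal.ofReal (Fcdf μ (-(n:ℝ))) :=
            ENNReal.ofReal_le_ofReal (hall _).le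
        _ = μ (Set.Iic (-(n:ℝ))) := ofReal_Fcdf _
    simp only [nonpos_iff_eq_zero] at h0
    rw [h0]
    exact zero_le

lemma measure_cdf_preimage_Ioo_le (hat : ∀ x : ℝ, μ {x} = 0) (a b : ℝ) :
    μ {x | Fcdf μ x ∈ Set.Ioo a b} ≤ ENNReal.ofReal (b - a) := by
  set T := {x | Fcdf μ x ∈ Set.Ioo a b} with hT
  rcases le_or_gt b a with hba | hab
  · have : T = ∅ := by
      ext x; simp only [hT, Set.mem_setOf_eq, Set.mem_Ioo, Set.mem_empty_iff_false, iff_false,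
        not_and, not_lt]
      intro h1; linarith
    simp [this]
  rcases Set.eq_empty_or_nonempty {x | a < Fcdf μ x} with hKe | hKne
  · have : T = ∅ := Set.eq_empty_of_subset_empty (fun x hx => hKe ▸ (Set.mem_setOf_eq ▸ hx.1))
    simp [this]
  by_cases ha : 0 ≤ a
  · have hLmeas : MeasurableSet {x | Fcdf μ x ≤ a} :=
      (Fcdf_mono (μ := μ)).measurable (measurableSet_Iic (a := a))
    have hdisj : Disjoint T {x | Fcdf μ x ≤ a} := by
      rw [Set.disjoint_left]
      rintro x ⟨hx1, _⟩ hx2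
      exact absurd hx2 (not_le.mpr hx1)
    have hsub : T ∪ {x | Fcdf μ x ≤ a} ⊆ {x | Fcdf μ x ≤ b} := by
      rintro x (⟨_, hx2⟩ | hx)
      · exact hx2.le
      · exact le_trans hx hab.le
    have hadd : μ T + μ {x | Fcdf μ x ≤ a} ≤ ENNReal.ofReal b := by
      rw [← measure_union hdisj hLmeas]
      exact le_trans (measure_mono hsub) (measure_le_cdf_le hat)
    have h2 : μ T + ENNReal.ofReal a ≤ ENNReal.ofReal b :=
      le_trans (add_le_add_right (measure_le_cdf_ge hat ha hKne) _) hadd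
    have : μ T ≤ ENNReal.ofReal b - ENNReal.ofReal a :=
      ENNReal.le_sub_of_add_le_right ENNReal.ofReal_ne_top h2
    calc μ T ≤ ENNReal.ofReal b - ENNReal.ofReal a := this
      _ = ENNReal.ofReal (b - a) := (ENNReal.ofReal_sub b ha).symm
  · push_neg at ha
    calc μ T ≤ μ {x | Fcdf μ x ≤ b} := measure_mono (fun x hx => hx.2.le)
      _ ≤ ENNReal.ofReal b := measure_le_cdf_le hat
      _ ≤ ENNReal.ofReal (b - a) := ENNReal.ofReal_le_ofReal (by linarith)

noncomputable def qseq : ℕ → ℝ := TopologicalSpace.denseSeq ℝ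

lemma denseRange_qseq : DenseRange qseq := TopologicalSpace.denseRange_denseSeq ℝ

lemma dense_iUnion_Ioo {δ : ℕ → ℝ} (hδ : ∀ n, 0 < δ n) :
    Dense (⋃ n, Set.Ioo (qseq n - δ n) (qseq n + δ n)) := by
  refine Dense.mono ?_ denseRange_qseq
  rintro x ⟨n, rfl⟩
  exact Set.mem_iUnion.mpr ⟨n, by constructor <;> [linarith [hδ n]; linarith [hδ n]]⟩

lemma dense_translate {s : Set ℝ} (hs : Dense s) (y : ℝ) : Dense {t : ℝ | y - t ∈ s} := by
  intro t
  have : y - t ∈ closure s := hs _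
  rw [mem_closure_iff_seq_limit] at this ⊢
  obtain ⟨u, hu, hlim⟩ := this
  exact ⟨fun n => y - u n, fun n => by simp [hu n], by
    have : Filter.Tendsto (fun n => y - u n) Filter.atTop (𝓝 (y - (y - t))) :=
      tendsto_const_nhds.sub hlim
    simpa using this⟩

lemma isMeagre_Mset {U : ℕ → Set ℝ} (hUo : ∀ k, IsOpen (U k)) (hUd : ∀ k, Dense (U k)) (y : ℝ) :
    IsMeagre (⋃ k, {t : ℝ | y - t ∈ (U k)ᶜ}) := by
  refine isMeagre_iUnion fun k => ?_
  have hclosed : IsClosed {t : ℝ | y - t ∈ (U k)ᶜ} :=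
    IsClosed.preimage (by fun_prop) (hUo k).isClosed_compl
  have hdense : Dense {t : ℝ | y - t ∈ (U k)ᶜ}ᶜ := by
    have : {t : ℝ | y - t ∈ (U k)ᶜ}ᶜ = {t : ℝ | y - t ∈ U k} := by
      ext t; simp
    rw [this]
    exact dense_translate (hUd k) y
  have : ({t : ℝ | y - t ∈ (U k)ᶜ}ᶜ : Set ℝ) ∈ residual ℝ :=
    residual_of_dense_open hclosed.isOpen_compl hdense
  exact this

lemma tsum_pow_half_le (k : ℕ) : (∑' n : ℕ, (2⁻¹ : ℝ≥0∞) ^ (n + k + 1)) ≤ (2⁻¹ : ℝ≥0∞) ^ k := by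
  have h : ∀ n : ℕ, (2⁻¹ : ℝ≥0∞) ^ (n + k + 1) = (2⁻¹ : ℝ≥0∞) ^ (k + 1) * (2⁻¹ : ℝ≥0∞) ^ n := by
    intro n; rw [← pow_add]; ring_nf
  calc (∑' n : ℕ, (2⁻¹ : ℝ≥0∞) ^ (n + k + 1))
      = (2⁻¹ : ℝ≥0∞) ^ (k + 1) * ∑' n : ℕ, (2⁻¹ : ℝ≥0∞) ^ n := by
        rw [← ENNReal.tsum_mul_left]; exact tsum_congr h
    _ = (2⁻¹ : ℝ≥0∞) ^ (k + 1) * 2 := by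
        rw [ENNReal.tsum_geometric, ENNReal.one_sub_inv_two, inv_inv]
    _ = (2⁻¹ : ℝ≥0∞) ^ k * (2⁻¹ * 2) := by rw [pow_succ]; ring
    _ ≤ (2⁻¹ : ℝ≥0∞) ^ k := by
        rw [ENNReal.inv_mul_cancel (by norm_num) (by norm_num), mul_one]

lemma measure_zero_of_forall_le_pow {μ : Measure ℝ} {G : Set ℝ}
    (h : ∀ k : ℕ, μ G ≤ (2⁻¹ : ℝ≥0∞) ^ k) : μ G = 0 := by
  refine le_antisymm ?_ zero_le
  exact ge_of_tendsto (ENNReal.tendsto_pow_atTop_nhds_zero_of_lt_one (by norm_num))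
    (Filter.Eventually.of_forall h)

lemma exists_null_comeager (μ : Measure ℝ) [IsFiniteMeasure μ] (hat : ∀ x : ℝ, μ {x} = 0) :
    ∃ G : Set ℝ, MeasurableSet G ∧ μ G = 0 ∧ IsMeagre Gᶜ := by
  have hδ : ∀ n k : ℕ, ∃ δ : ℝ, 0 < δ ∧
      μ (Set.Ioo (qseq n - δ) (qseq n + δ)) < (2⁻¹ : ℝ≥0∞) ^ (n + k + 1) := by
    intro n k
    have hI : (⋂ m : ℕ, Set.Ioo (qseq n - 1/(m+1)) (qseq n + 1/(m+1))) = {qseq n} := by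
      ext y
      simp only [Set.mem_iInter, Set.mem_Ioo, Set.mem_singleton_iff]
      constructor
      · intro hy
        by_contra hne
        have hpos : 0 < |y - qseq n| := abs_pos.mpr (sub_ne_zero.mpr hne)
        obtain ⟨m, hm⟩ := exists_nat_one_div_lt hpos
        have h1 := (hy m).1
        have h2 := (hy m).2
        have habs : |y - qseq n| < 1/(m+1) := abs_sub_lt_iff.mpr ⟨by linarith, by linarith⟩
        linarith
      · rintro rfl m
        have : (0:ℝ) < 1/(m+1) := by positivity
        constructor <;> linarith
    have hanti : Antitone (fun m : ℕ => Set.Ioo (qseq n - 1/(m+1)) (qseq n + 1/(m+1))) := by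
      intro m m' hmm' y hy
      simp only [Set.mem_Ioo] at hy ⊢
      have hc : (m:ℝ) ≤ m' := Nat.cast_le.mpr hmm'
      have h1 : (1:ℝ)/(m'+1) ≤ 1/(m+1) := by
        apply one_div_le_one_div_of_le (by positivity)
        linarith
      constructor <;> [linarith [hy.1]; linarith [hy.2]]
    have htend := tendsto_measure_iInter_atTop (μ := μ)
      (fun m => measurableSet_Ioo.nullMeasurableSet) hanti ⟨0, measure_ne_top μ _⟩
    rw [hI, hat] at htend
    have hpos : (0 : ℝ≥0∞) < (2⁻¹ : ℝ≥0∞) ^ (n + k + 1) :=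
      ENNReal.pow_pos (by norm_num) _
    obtain ⟨m, hm⟩ := (htend.eventually (gt_mem_nhds hpos)).exists
    exact ⟨1/(m+1), by positivity, hm⟩
  choose δ hδpos hδlt using hδ
  set W : ℕ → Set ℝ := fun k => ⋃ n, Set.Ioo (qseq n - δ n k) (qseq n + δ n k) with hW
  have hWo : ∀ k, IsOpen (W k) := fun k => isOpen_iUnion fun n => isOpen_Ioo
  have hWd : ∀ k, Dense (W k) := fun k => dense_iUnion_Ioo (fun n => hδpos n k)
  refine ⟨⋂ k, W k, MeasurableSet.iInter (fun k => (hWo k).measurableSet), ?_, ?_⟩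
  · refine measure_zero_of_forall_le_pow fun k => ?_
    calc μ (⋂ k, W k) ≤ μ (W k) := measure_mono (Set.iInter_subset _ k)
      _ ≤ ∑' n, μ (Set.Ioo (qseq n - δ n k) (qseq n + δ n k)) := measure_iUnion_le _
      _ ≤ ∑' n : ℕ, (2⁻¹ : ℝ≥0∞) ^ (n + k + 1) := ENNReal.tsum_le_tsum fun n => (hδlt n k).le
      _ ≤ (2⁻¹ : ℝ≥0∞) ^ k := tsum_pow_half_le k
  · rw [Set.compl_iInter]
    refine isMeagre_iUnion fun k => ?_
    have : (((W k)ᶜ)ᶜ : Set ℝ) ∈ residual ℝ := by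
      rw [compl_compl]
      exact residual_of_dense_open (hWo k) (hWd k)
    exact this

lemma exists_luzin (h : covMeager = cofMeager) :
    ∃ A : Set ℝ, ¬ IsMeagre A ∧
      ∀ M : Set ℝ, IsMeagre M → #↥(A ∩ M) < covMeager := by
  have hne : { c : Cardinal | ∃ D : Set (Set ℝ),
      #D = c ∧ (∀ A ∈ D, IsMeagre A) ∧ ∀ M : Set ℝ, IsMeagre M → ∃ A ∈ D, M ⊆ A }.Nonempty :=
    ⟨#{A : Set ℝ | IsMeagre A}, {A | IsMeagre A}, rfl, fun A hA => hA,
      fun M hM => ⟨M, hM, subset_rfl⟩⟩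
  have hmem := csInf_mem hne
  rw [← cofMeager, ← h] at hmem
  obtain ⟨D, hD, hDm, hDcof⟩ := hmem
  set κ := covMeager with hκ
  let ι := κ.ord.ToType
  have hι : #ι = κ := by rw [Cardinal.mk_toType, card_ord]
  have e : ι ≃ ↥D := Classical.choice (Cardinal.eq.mp (by rw [hι, hD]))
  have hsmall : ∀ b : ι, #↥((fun a : ι => ((e a : Set ℝ))) '' {a | a ≤ b}) < κ := by
    intro b
    refine lt_of_le_of_lt (Cardinal.mk_image_le) ?_
    have : {a : ι | a ≤ b} = insert b (Iio b) := by
      ext a; simp [le_iff_lt_or_eq, Set.mem_insert_iff, or_comm]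
    rw [this]
    refine lt_of_le_of_lt (Cardinal.mk_insert_le) ?_
    exact Cardinal.add_lt_of_lt aleph0_le_covMeager (Cardinal.mk_Iio_ord_toType b)
      (lt_of_lt_of_le Cardinal.one_lt_aleph0 aleph0_le_covMeager)
  have hx : ∀ b : ι, ∃ t : ℝ, ∀ a : ι, a ≤ b → t ∉ (e a : Set ℝ) := by
    intro b
    obtain ⟨t, ht⟩ := sUnion_ne_univ (S := (fun a : ι => ((e a : Set ℝ))) '' {a | a ≤ b})
      (by rintro A ⟨a, _, rfl⟩; exact hDm _ (e a).2) (hsmall b)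
    exact ⟨t, fun a hab => ht _ ⟨a, hab, rfl⟩⟩
  choose x hxp using hx
  refine ⟨Set.range x, ?_, ?_⟩
  · intro hmg
    obtain ⟨d, hd, hsub⟩ := hDcof _ hmg
    set a := e.symm ⟨d, hd⟩
    have : x a ∈ d := hsub (Set.mem_range_self a)
    have hd' : (e a : Set ℝ) = d := by simp [a]
    exact hxp a a le_rfl (hd' ▸ this)
  · intro M hM
    obtain ⟨d, hd, hsub⟩ := hDcof _ hM
    set a₀ := e.symm ⟨d, hd⟩
    have hd' : (e a₀ : Set ℝ) = d := by simp [a₀]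
    have hsub2 : Set.range x ∩ M ⊆ x '' (Iio a₀) := by
      rintro y ⟨⟨b, rfl⟩, hyM⟩
      refine ⟨b, ?_, rfl⟩
      by_contra hb
      exact hxp b a₀ (le_of_not_gt (by simpa using hb)) (hd' ▸ hsub hyM)
    calc #↥(Set.range x ∩ M) ≤ #↥(x '' (Iio a₀)) := Cardinal.mk_le_mk_of_subset hsub2
      _ ≤ #↥(Iio a₀) := Cardinal.mk_image_le
      _ < κ := Cardinal.mk_Iio_ord_toType a₀


lemma ofReal_pow_half (m : ℕ) : ENNReal.ofReal ((2⁻¹ : ℝ) ^ m) = (2⁻¹ : ℝ≥0∞) ^ m := by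
  rw [ENNReal.ofReal_pow (by norm_num)]
  congr 1
  rw [show ((2:ℝ)⁻¹ : ℝ) = (2⁻¹ : ℝ) from rfl]
  rw [ENNReal.ofReal_inv_of_pos (by norm_num)]
  norm_num

lemma small_null (μ : Measure ℝ) [IsFiniteMeasure μ] (hat : ∀ x : ℝ, μ {x} = 0)
    (X : Set ℝ) (hX : #X < covMeager) :
    ∃ N : Set ℝ, MeasurableSet N ∧ X ⊆ N ∧ μ N = 0 := by
  set r : ℕ → ℕ → ℝ := fun n k => (2⁻¹ : ℝ) ^ (n + k + 2) with hr
  have hrpos : ∀ n k, 0 < r n k := fun n k => by positivity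
  set U : ℕ → Set ℝ := fun k => ⋃ n, Set.Ioo (qseq n - r n k) (qseq n + r n k) with hU
  have hUo : ∀ k, IsOpen (U k) := fun k => isOpen_iUnion fun n => isOpen_Ioo
  have hUd : ∀ k, Dense (U k) := fun k => dense_iUnion_Ioo (fun n => hrpos n k)
  set S := (fun y => ⋃ k, {t : ℝ | y - t ∈ (U k)ᶜ}) '' (Fcdf μ '' X) with hS
  have hSm : ∀ A ∈ S, IsMeagre A := by
    rintro A ⟨y, _, rfl⟩
    exact isMeagre_Mset hUo hUd y
  have hScard : #S < covMeager :=
    lt_of_le_of_lt (Cardinal.mk_image_le.trans Cardinal.mk_image_le) hX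
  obtain ⟨t, ht⟩ := sUnion_ne_univ hSm hScard
  have ht' : ∀ x ∈ X, ∀ k, Fcdf μ x - t ∈ U k := by
    intro x hx k
    have h1 : t ∉ ⋃ k, {s : ℝ | Fcdf μ x - s ∈ (U k)ᶜ} :=
      ht _ ⟨Fcdf μ x, ⟨x, hx, rfl⟩, rfl⟩
    simp only [Set.mem_iUnion, Set.mem_setOf_eq, Set.mem_compl_iff, not_exists, not_not] at h1
    exact h1 k
  have hkey : ∀ k, Fcdf μ ⁻¹' {z | z - t ∈ U k}
      = ⋃ n, {x | Fcdf μ x ∈ Set.Ioo (qseq n + t - r n k) (qseq n + t + r n k)} := by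
    intro k
    ext x
    simp only [Set.mem_preimage, Set.mem_setOf_eq, hU, Set.mem_iUnion, Set.mem_Ioo]
    constructor
    · rintro ⟨n, h1, h2⟩
      exact ⟨n, by linarith, by linarith⟩
    · rintro ⟨n, h1, h2⟩
      exact ⟨n, by linarith, by linarith⟩
  refine ⟨⋂ k, Fcdf μ ⁻¹' {z | z - t ∈ U k}, ?_, ?_, ?_⟩
  · refine MeasurableSet.iInter fun k => ?_
    have hopen : IsOpen {z : ℝ | z - t ∈ U k} :=
      (hUo k).preimage (continuous_sub_right t)
    exact (Fcdf_mono (μ := μ)).measurable hopen.measurableSet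
  · intro x hx
    exact Set.mem_iInter.mpr fun k => ht' x hx k
  · refine measure_zero_of_forall_le_pow fun k => ?_
    calc μ (⋂ k, Fcdf μ ⁻¹' {z | z - t ∈ U k})
        ≤ μ (Fcdf μ ⁻¹' {z | z - t ∈ U k}) := measure_mono (Set.iInter_subset _ k)
      _ = μ (⋃ n, {x | Fcdf μ x ∈ Set.Ioo (qseq n + t - r n k) (qseq n + t + r n k)}) := by
          rw [hkey]
      _ ≤ ∑' n, μ {x | Fcdf μ x ∈ Set.Ioo (qseq n + t - r n k) (qseq n + t + r n k)} :=
          measure_iUnion_le _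
      _ ≤ ∑' n : ℕ, (2⁻¹ : ℝ≥0∞) ^ (n + k + 1) := by
          refine ENNReal.tsum_le_tsum fun n => ?_
          have hb := measure_cdf_preimage_Ioo_le (μ := μ) hat
            (qseq n + t - r n k) (qseq n + t + r n k)
          have heq : qseq n + t + r n k - (qseq n + t - r n k) = (2⁻¹ : ℝ) ^ (n + k + 1) := by
            rw [hr]; ring
          rw [heq, ofReal_pow_half] at hb
          exact hb
      _ ≤ (2⁻¹ : ℝ≥0∞) ^ k := tsum_pow_half_le k

end Stmt15Aux

end Aux

/-- If `cov(M)` = `cof(M)`, then there exists a universally null subset of `ℝ` that is not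
meager. -/
theorem stmt15 (h : covMeager = cofMeager) :
    ∃ A : Set ℝ,
      (∀ μ : Measure ℝ, SigmaFinite μ → (∀ x : ℝ, μ {x} = 0) →
        ∃ N : Set ℝ, MeasurableSet N ∧ A ⊆ N ∧ μ N = 0) ∧
      ¬ IsMeagre A := by
  obtain ⟨A, hAnm, hAsmall⟩ := Stmt15Aux.exists_luzin h
  refine ⟨A, ?_, hAnm⟩
  intro μ hσ hat
  haveI := hσ
  obtain ⟨ν, hνfin, hμν, hνμ⟩ := MeasureTheory.exists_isFiniteMeasure_absolutelyContinuous μ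
  haveI := hνfin
  have hatν : ∀ x : ℝ, ν {x} = 0 := fun x => hνμ (hat x)
  obtain ⟨G, hGmeas, hGnull, hGc⟩ := Stmt15Aux.exists_null_comeager ν hatν
  obtain ⟨N₁, hN₁meas, hN₁sub, hN₁null⟩ :=
    Stmt15Aux.small_null ν hatν (A ∩ Gᶜ) (hAsmall _ hGc)
  refine ⟨N₁ ∪ G, hN₁meas.union hGmeas, ?_, ?_⟩
  · intro x hx
    by_cases hxG : x ∈ G
    · exact Set.mem_union_right _ hxG
    · exact Set.mem_union_left _ (hN₁sub ⟨hx, hxG⟩)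
  · refine hμν ?_
    refine le_antisymm ?_ zero_le
    calc ν (N₁ ∪ G) ≤ ν N₁ + ν G := measure_union_le _ _
      _ = 0 := by rw [hN₁null, hGnull, add_zero]
end

section
/- Let (μ_n)_{n∈ω} be atomless Borel probability measures on ℝ and let μ be their product measure on ∏_{n∈ω} ℝ. If D ⊆ ∏_{n∈ω} ℝ is a Borel set with μ(D) > 0, then there exist perfect sets C_n ⊆ ℝ (n ∈ ω) such that ∏_{n∈ω} C_n ⊆ D. -/
open MeasureTheory Set Filter Metric Topology ENNReal

noncomputable section

namespace PerfectProd

/-- prepend a value to a sequence -/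
def cons (a : ℝ) (y : ℕ → ℝ) : ℕ → ℝ := fun n => Nat.casesOn n a y

@[simp] lemma cons_zero (a : ℝ) (y : ℕ → ℝ) : cons a y 0 = a := rfl
@[simp] lemma cons_succ (a : ℝ) (y : ℕ → ℝ) (n : ℕ) : cons a y (n + 1) = y n := rfl

lemma measurable_cons : Measurable (fun p : ℝ × (ℕ → ℝ) => cons p.1 p.2) := by
  apply measurable_pi_lambda
  intro n
  cases n with
  | zero => exact measurable_fst
  | succ k => exact (measurable_pi_apply k).comp measurable_snd

lemma continuous_cons : Continuous (fun p : ℝ × (ℕ → ℝ) => cons p.1 p.2) := by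
  apply continuous_pi
  intro n
  cases n with
  | zero => exact continuous_fst
  | succ k => exact (continuous_apply k).comp continuous_snd

/-- Extensionality for probability measures on `ℕ → ℝ` from agreement on boxes. -/
lemma ext_boxes {μ₁ μ₂ : Measure (ℕ → ℝ)} [IsProbabilityMeasure μ₁] [IsProbabilityMeasure μ₂]
    (h : ∀ (s : Finset ℕ) (t : ℕ → Set ℝ), (∀ n, MeasurableSet (t n)) →
      μ₁ ((s : Set ℕ).pi t) = μ₂ ((s : Set ℕ).pi t)) : μ₁ = μ₂ := by
  refine ext_of_generate_finite _ generateFrom_squareCylinders.symm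
    (isPiSystem_squareCylinders (fun _ => MeasurableSpace.isPiSystem_measurableSet)
      (fun _ => by simp only [Set.mem_setOf_eq]; exact MeasurableSet.univ))
    ?_ (by simp)
  rintro S ⟨s, t, ht, rfl⟩
  exact h s t (fun n => ht n (mem_univ n))

/-- dropping the first `m` coordinates -/
def shiftMap (m : ℕ) : (ℕ → ℝ) → (ℕ → ℝ) := fun x n => x (n + m)

lemma measurable_shiftMap (m : ℕ) : Measurable (shiftMap m) :=
  measurable_pi_lambda _ fun n => measurable_pi_apply (n + m)

section Tail

variable (ν : ℕ → Measure ℝ) [∀ n, IsProbabilityMeasure (ν n)]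
  (μ : Measure (ℕ → ℝ)) [IsProbabilityMeasure μ]

instance (m : ℕ) : IsProbabilityMeasure (μ.map (shiftMap m)) :=
  Measure.isProbabilityMeasure_map (measurable_shiftMap m).aemeasurable

omit [∀ (n : ℕ), IsProbabilityMeasure (ν n)] [IsProbabilityMeasure μ] in
lemma map_shift_cyl
    (hcyl : ∀ (s : Finset ℕ) (t : ℕ → Set ℝ), (∀ n ∈ s, MeasurableSet (t n)) →
      μ (Set.pi ↑s t) = ∏ n ∈ s, ν n (t n)) (m : ℕ) (s : Finset ℕ) (t : ℕ → Set ℝ) (ht : ∀ n, MeasurableSet (t n)) :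
    (μ.map (shiftMap m)) ((s : Set ℕ).pi t) = ∏ n ∈ s, ν (n + m) (t n) := by
  rw [Measure.map_apply (measurable_shiftMap m)
    (MeasurableSet.pi s.countable_toSet (fun n _ => ht n))]
  have hpre : shiftMap m ⁻¹' ((s : Set ℕ).pi t)
      = ((s.image (· + m) : Finset ℕ) : Set ℕ).pi (fun k => t (k - m)) := by
    ext x
    simp only [mem_preimage, Set.mem_pi, shiftMap, Finset.coe_image, Set.mem_image,
      Finset.mem_coe]
    constructor
    · rintro hx k ⟨n, hn, rfl⟩
      simpa [Nat.add_sub_cancel] using hx n hn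
    · intro hx n hn
      simpa [Nat.add_sub_cancel] using hx (n + m) ⟨n, hn, rfl⟩
  rw [hpre, hcyl _ _ (fun n _ => ht (n - m))]
  rw [Finset.prod_image (fun a _ b _ hab => by omega)]
  exact Finset.prod_congr rfl (fun n _ => by simp [Nat.add_sub_cancel])

lemma map_shift_succ
    (hcyl : ∀ (s : Finset ℕ) (t : ℕ → Set ℝ), (∀ n ∈ s, MeasurableSet (t n)) →
      μ (Set.pi ↑s t) = ∏ n ∈ s, ν n (t n)) (m : ℕ) :
    ((ν m).prod (μ.map (shiftMap (m + 1)))).map (fun p : ℝ × (ℕ → ℝ) => cons p.1 p.2)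
      = μ.map (shiftMap m) := by
  classical
  haveI : IsProbabilityMeasure (((ν m).prod (μ.map (shiftMap (m + 1)))).map
      (fun p : ℝ × (ℕ → ℝ) => cons p.1 p.2)) :=
    Measure.isProbabilityMeasure_map measurable_cons.aemeasurable
  refine ext_boxes (fun s t ht => ?_)
  rw [map_shift_cyl ν μ hcyl m s t ht]
  rw [Measure.map_apply measurable_cons (MeasurableSet.pi s.countable_toSet (fun n _ => ht n))]
  have hpre : (fun p : ℝ × (ℕ → ℝ) => cons p.1 p.2) ⁻¹' ((s : Set ℕ).pi t)
      = (if 0 ∈ s then t 0 else univ) ×ˢ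
        ((((s.erase 0).image (· - 1) : Finset ℕ) : Set ℕ).pi (fun k => t (k + 1))) := by
    ext ⟨a, y⟩
    simp only [mem_preimage, Set.mem_pi, Finset.mem_coe, mem_prod, Finset.coe_image,
      Set.mem_image, Finset.mem_erase]
    constructor
    · intro hx
      refine ⟨?_, ?_⟩
      · split_ifs with h0
        · exact hx 0 h0
        · exact mem_univ a
      · rintro k ⟨n, ⟨hn0, hns⟩, rfl⟩
        obtain ⟨j, rfl⟩ : ∃ j, n = j + 1 := ⟨n - 1, by omega⟩
        simpa using hx (j + 1) hns
    · rintro ⟨h0, hk⟩ n hns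
      cases n with
      | zero =>
        rw [if_pos hns] at h0
        exact h0
      | succ k =>
        rw [cons_succ]
        exact hk k ⟨k + 1, ⟨by omega, hns⟩, by omega⟩
  rw [hpre, Measure.prod_prod,
    map_shift_cyl ν μ hcyl (m + 1) _ _ (fun k => ht (k + 1))]
  have hprod : ∏ k ∈ (s.erase 0).image (· - 1), ν (k + (m + 1)) (t (k + 1))
      = ∏ n ∈ s.erase 0, ν (n + m) (t n) := by
    rw [Finset.prod_image (fun a ha b hb hab => by
      simp only [Finset.mem_coe, Finset.mem_erase] at ha hb; omega)]
    refine Finset.prod_congr rfl (fun n hn => ?_)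
    simp only [Finset.mem_erase] at hn
    have h1 : n - 1 + (m + 1) = n + m := by omega
    have h2 : n - 1 + 1 = n := by omega
    rw [h1, h2]
  rw [hprod]
  split_ifs with h0
  · rw [← Finset.mul_prod_erase s _ h0, Nat.zero_add]
  · rw [Finset.erase_eq_of_notMem h0, measure_univ, one_mul]

end Tail



/-- section of a subset of the product at a first coordinate -/
def Sec (S : Set (ℝ × (ℕ → ℝ))) (x : ℝ) : Set (ℕ → ℝ) := Prod.mk x ⁻¹' S

lemma measurableSet_sec {S : Set (ℝ × (ℕ → ℝ))} (hS : MeasurableSet S) (x : ℝ) :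
    MeasurableSet (Sec S x) := (measurable_prodMk_left) hS

/-- a set of positive measure w.r.t. an atomless measure contains two points -/
lemma exists_pair {η : Measure ℝ} (hη : ∀ x : ℝ, η {x} = 0) {s : Set ℝ} (h : 0 < η s) :
    ∃ a ∈ s, ∃ b ∈ s, a ≠ b := by
  obtain ⟨a, ha⟩ := nonempty_of_measure_ne_zero h.ne'
  by_contra hcon
  push_neg at hcon
  have hsub : s ⊆ {a} := by
    intro b hb
    have := hcon a ha b hb
    simp [this.symm]
  have h0 : η s ≤ 0 := by simpa [hη a] using measure_mono (μ := η) hsub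
  exact absurd (le_antisymm h0 zero_le) h.ne'

/-- a.e. point has all its closed balls of positive measure -/
lemma ae_ball_pos (η : Measure ℝ) [IsFiniteMeasure η] :
    ∀ᵐ x ∂η, ∀ r : ℝ, 0 < r → 0 < η (closedBall x r) := by
  rw [ae_iff]
  push_neg
  have hsub : {x : ℝ | ∃ r, 0 < r ∧ η (closedBall x r) ≤ 0} ⊆
      ⋃ p : ℚ × ℚ, if 0 < (p.2 : ℝ) ∧ η (closedBall (p.1 : ℝ) (p.2 : ℝ)) = 0
        then closedBall (p.1 : ℝ) (p.2 : ℝ) else ∅ := by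
    rintro x ⟨r, hr, hx⟩
    have hη0 : η (closedBall x r) = 0 := le_antisymm hx zero_le
    obtain ⟨q, hq1, hq2⟩ := exists_rat_btwn (show x - r/4 < x by linarith)
    obtain ⟨ε, he1, he2⟩ := exists_rat_btwn (show r/4 < r/2 by linarith)
    have hmem : x ∈ closedBall (q : ℝ) (ε : ℝ) := by
      rw [mem_closedBall, Real.dist_eq, abs_sub_le_iff]
      constructor <;> linarith
    have hball : closedBall (q : ℝ) (ε : ℝ) ⊆ closedBall x r := by
      apply closedBall_subset_closedBall'
      have : dist (q : ℝ) x ≤ r / 4 := by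
        rw [Real.dist_eq, abs_sub_le_iff]; constructor <;> linarith
      linarith
    have hz : η (closedBall (q : ℝ) (ε : ℝ)) = 0 :=
      le_antisymm (hη0 ▸ measure_mono hball) zero_le
    refine mem_iUnion.2 ⟨(q, ε), ?_⟩
    have hε0 : (0:ℝ) < ((q, ε).2 : ℚ) := by
      show (0:ℝ) < (ε:ℚ)
      exact_mod_cast lt_trans (by linarith : (0:ℝ) < r/4) he1
    rw [if_pos ⟨hε0, hz⟩]
    exact hmem
  refine le_antisymm ((measure_mono hsub).trans ?_) zero_le
  refine le_of_eq (measure_iUnion_null fun p => ?_)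
  split_ifs with h
  · exact h.2
  · exact measure_empty

/-- ball-version of the Lebesgue differentiation theorem on ℝ -/
lemma ae_tendsto_avg (η : Measure ℝ) [IsFiniteMeasure η] {g : ℝ → ℝ}
    (hg : Measurable g) (hb : ∀ x, ‖g x‖ ≤ 1) :
    ∀ᵐ x ∂η, Tendsto (fun r => ⨍ z in closedBall x r, g z ∂η) (𝓝[>] (0:ℝ)) (𝓝 (g x)) := by
  have hint : Integrable g η :=
    (integrable_const (1:ℝ)).mono' hg.aestronglyMeasurable (ae_of_all _ hb)
  filter_upwards [(Besicovitch.vitaliFamily η).ae_tendsto_average hint.locallyIntegrable]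
    with x hx using hx.comp (Besicovitch.tendsto_filterAt η x)

section Pick

variable {η : Measure ℝ} [IsProbabilityMeasure η]
  {P : Measure (ℕ → ℝ)} [IsProbabilityMeasure P]
  {S : Set (ℝ × (ℕ → ℝ))}

lemma measurable_defect (P : Measure (ℕ → ℝ)) [IsProbabilityMeasure P]
    (hS : MeasurableSet S) {W : Set (ℕ → ℝ)} (hW : MeasurableSet W) :
    Measurable (fun z : ℝ => P (W \ Sec S z)) := by
  have h : ∀ z : ℝ, W \ Sec S z = Prod.mk z ⁻¹' ((univ ×ˢ W) \ S) := by
    intro z; ext y; simp [Sec, Set.mem_diff]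
  simp_rw [h]
  exact measurable_measure_prodMk_left ((MeasurableSet.univ.prod hW).diff hS)

lemma pick_lemma (hη : ∀ x : ℝ, η {x} = 0) (hS : MeasurableSet S)
    {𝒜 : Set (Set (ℕ → ℝ))} (hd : P.MeasureDense 𝒜)
    {A₀ : Set ℝ} {G : Set ℝ} (hGconull : η Gᶜ = 0)
    {x : ℝ} (hxA : x ∈ A₀)
    (hx1 : ∀ W ∈ 𝒜, Tendsto (fun r => ⨍ z in closedBall x r, (P (W \ Sec S z)).toReal ∂η)
      (𝓝[>] (0:ℝ)) (𝓝 ((P (W \ Sec S x)).toReal)))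
    (hx2 : Tendsto (fun r => η (A₀ ∩ closedBall x r) / η (closedBall x r)) (𝓝[>] (0:ℝ)) (𝓝 1))
    (hx3 : ∀ r : ℝ, 0 < r → 0 < η (closedBall x r))
    (e : ℝ≥0∞) (he : e ≠ 0) (he' : e ≠ ⊤) (r₀ : ℝ) (hr₀ : 0 < r₀) :
    ∃ q : (ℝ × ℝ) × ℝ,
      (q.1.1 ∈ A₀ ∩ G) ∧ (q.1.2 ∈ A₀ ∩ G) ∧ q.1.1 ≠ q.1.2 ∧ 0 < q.2 ∧
      closedBall q.1.1 q.2 ⊆ closedBall x r₀ ∧ closedBall q.1.2 q.2 ⊆ closedBall x r₀ ∧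
      Disjoint (closedBall q.1.1 q.2) (closedBall q.1.2 q.2) ∧ q.2 ≤ r₀ ∧
      P (Sec S x \ Sec S q.1.1) ≤ e ∧ P (Sec S x \ Sec S q.1.2) ≤ e := by
  have hPfin : ∀ W : Set (ℕ → ℝ), P W ≠ ∞ := fun W => measure_ne_top P W
  have het : 0 < e.toReal := ENNReal.toReal_pos he he'
  -- choose an approximating set W ∈ 𝒜
  obtain ⟨W, hW𝒜, hWsd⟩ := hd.approx (Sec S x) (measurableSet_sec hS x) (hPfin _)
    (e.toReal / 16) (by positivity)
  have hofr : ENNReal.ofReal (e.toReal / 16) = e / 16 := by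
    rw [ENNReal.ofReal_div_of_pos (by norm_num), ENNReal.ofReal_toReal he']
    norm_num
  rw [hofr] at hWsd
  have hWm : MeasurableSet W := hd.measurable W hW𝒜
  set ψ : ℝ → ℝ≥0∞ := fun z => P (W \ Sec S z) with hψdef
  have hψm : Measurable ψ := measurable_defect P hS hWm
  have he16 : (e / 16 : ℝ≥0∞) ≠ ⊤ := by
    simp [ENNReal.div_eq_top, he']
  have hψx : ψ x < e / 16 :=
    lt_of_le_of_lt (measure_mono fun z hz => Or.inr ⟨hz.1, hz.2⟩) hWsd
  -- the three eventual properties of small balls around x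
  have hevt1 : ∀ᶠ r in 𝓝[>] (0:ℝ),
      ⨍ z in closedBall x r, (ψ z).toReal ∂η < (e / 8).toReal := by
    refine (hx1 W hW𝒜).eventually_lt_const ?_
    have h1 : (ψ x).toReal < (e / 16).toReal := ENNReal.toReal_strict_mono he16 hψx
    have h2 : (e / 16).toReal ≤ (e / 8).toReal := by
      rw [ENNReal.toReal_div, ENNReal.toReal_div]
      norm_num
      linarith
    linarith
  have hevt2 : ∀ᶠ r in 𝓝[>] (0:ℝ),
      (1/2 : ℝ≥0∞) < η (A₀ ∩ closedBall x r) / η (closedBall x r) :=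
    hx2.eventually_const_lt (by norm_num)
  have hevt3 : Ioo (0:ℝ) (r₀/2) ∈ 𝓝[>] (0:ℝ) :=
    Ioo_mem_nhdsGT_of_mem ⟨le_refl 0, by linarith⟩
  obtain ⟨r, havg, hdens, hr0, hrlt⟩ :
      ∃ r : ℝ, (⨍ z in closedBall x r, (ψ z).toReal ∂η < (e / 8).toReal) ∧
        ((1/2 : ℝ≥0∞) < η (A₀ ∩ closedBall x r) / η (closedBall x r)) ∧
        0 < r ∧ r < r₀ / 2 := by
    obtain ⟨r, h1, h2, h3⟩ := (hevt1.and (hevt2.and hevt3)).exists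
    exact ⟨r, h1, h2, h3.1, h3.2⟩
  set B := closedBall x r with hBdef
  have hBpos : 0 < η B := hx3 r hr0
  have hBfin : η B ≠ ∞ := measure_ne_top η B
  have hbR : 0 < (η B).toReal := ENNReal.toReal_pos hBpos.ne' hBfin
  -- density: η (A₀ ∩ B) > η B / 2 (in real form)
  have hdensR : (η B).toReal / 2 < (η (A₀ ∩ B)).toReal := by
    have hne : η (A₀ ∩ B) / η B ≠ ⊤ := by
      rw [Ne, ENNReal.div_eq_top]
      push_neg
      exact ⟨fun _ => hBpos.ne', fun h => absurd h (measure_ne_top η _)⟩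
    have h := ENNReal.toReal_strict_mono hne hdens
    rw [ENNReal.toReal_div, ENNReal.toReal_div, ENNReal.toReal_one, ENNReal.toReal_ofNat] at h
    rw [lt_div_iff₀ hbR] at h
    linarith
  -- Markov inequality: the bad set is small
  set Bad : Set ℝ := {z | e / 2 ≤ ψ z} ∩ B with hBad
  have hBadm : MeasurableSet Bad := (hψm measurableSet_Ici).inter measurableSet_closedBall
  have hψb : ∀ z, (ψ z).toReal ≤ 1 := by
    intro z
    have : ψ z ≤ 1 := prob_le_one
    exact_mod_cast ENNReal.toReal_mono one_ne_top this
  have hψint : IntegrableOn (fun z => (ψ z).toReal) B η := by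
    refine (integrable_const (1:ℝ)).mono'
      (hψm.ennreal_toReal).aestronglyMeasurable (ae_of_all _ fun z => ?_)
    rw [Real.norm_eq_abs, abs_of_nonneg ENNReal.toReal_nonneg]
    exact hψb z
  have hlint : ∫⁻ z in B, ψ z ∂η ≤ e / 8 * η B := by
    have h1 : ∫⁻ z in B, ψ z ∂η = ENNReal.ofReal (∫ z in B, (ψ z).toReal ∂η) := by
      rw [ofReal_integral_eq_lintegral_ofReal hψint (ae_of_all _ fun z => ENNReal.toReal_nonneg)]
      refine lintegral_congr fun z => ?_
      rw [ENNReal.ofReal_toReal (hPfin _)]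
    rw [h1]
    have h2 : ∫ z in B, (ψ z).toReal ∂η ≤ (e/8).toReal * (η B).toReal := by
      have hh := havg
      rw [setAverage_eq, smul_eq_mul, measureReal_def, inv_mul_lt_iff₀ hbR] at hh
      have hcomm := mul_comm (η B).toReal ((e/8 : ℝ≥0∞)).toReal
      linarith
    calc ENNReal.ofReal (∫ z in B, (ψ z).toReal ∂η)
        ≤ ENNReal.ofReal ((e/8).toReal * (η B).toReal) := ENNReal.ofReal_le_ofReal h2
      _ = e / 8 * η B := by
          rw [ENNReal.ofReal_mul ENNReal.toReal_nonneg, ENNReal.ofReal_toReal (by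
            simp [ENNReal.div_eq_top, he']), ENNReal.ofReal_toReal hBfin]
  have hmarkov : e / 2 * η Bad ≤ e / 8 * η B := by
    have h1 : e / 2 * (η.restrict B) {z | e / 2 ≤ ψ z} ≤ ∫⁻ z in B, ψ z ∂η :=
      mul_meas_ge_le_lintegral₀ hψm.aemeasurable (e/2)
    have hms : MeasurableSet {z : ℝ | e / 2 ≤ ψ z} := hψm measurableSet_Ici
    rw [Measure.restrict_apply hms] at h1
    exact le_trans h1 hlint
  have hBadR : (η Bad).toReal ≤ (η B).toReal / 4 := by
    have hfin2 : e / 8 * η B ≠ ⊤ :=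
      ENNReal.mul_ne_top (by simp [ENNReal.div_eq_top, he']) hBfin
    have := ENNReal.toReal_mono hfin2 hmarkov
    rw [ENNReal.toReal_mul, ENNReal.toReal_mul, ENNReal.toReal_div, ENNReal.toReal_div,
      ENNReal.toReal_ofNat, ENNReal.toReal_ofNat] at this
    have hbad0 : 0 ≤ (η Bad).toReal := ENNReal.toReal_nonneg
    nlinarith
  -- the good set has positive measure
  set Good : Set ℝ := ((A₀ ∩ G) ∩ B) \ Bad with hGood
  have hGoodpos : 0 < η Good := by
    have h1 : η (A₀ ∩ B) ≤ η ((A₀ ∩ G) ∩ B) + η Gᶜ := by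
      refine le_trans (measure_mono ?_) (measure_union_le _ _)
      intro z hz
      by_cases hzG : z ∈ G
      · exact Or.inl ⟨⟨hz.1, hzG⟩, hz.2⟩
      · exact Or.inr hzG
    rw [hGconull, add_zero] at h1
    have h2 : η ((A₀ ∩ G) ∩ B) ≤ η Good + η Bad := by
      refine le_trans (measure_mono ?_) (measure_union_le _ _)
      intro z hz
      by_cases hzB : z ∈ Bad
      · exact Or.inr hzB
      · exact Or.inl ⟨hz, hzB⟩
    by_contra hcon
    push_neg at hcon
    have h0 : η Good = 0 := le_antisymm hcon zero_le
    rw [h0, zero_add] at h2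
    have h4 := ENNReal.toReal_mono (measure_ne_top η _) (h1.trans h2)
    linarith
  obtain ⟨c₁, hc₁, c₂, hc₂, hcne⟩ := exists_pair hη hGoodpos
  -- defect bound for good points
  have hdefect : ∀ c ∈ Good, P (Sec S x \ Sec S c) ≤ e := by
    intro c hc
    have h1 : Sec S x \ Sec S c ⊆ (Sec S x \ W) ∪ (W \ Sec S c) := by
      intro z hz
      by_cases hzW : z ∈ W
      · exact Or.inr ⟨hzW, hz.2⟩
      · exact Or.inl ⟨hz.1, hzW⟩
    have h2 : P (Sec S x \ W) ≤ e / 16 :=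
      le_trans (measure_mono fun z hz => Or.inl hz) hWsd.le
    have h3 : ψ c < e / 2 := lt_of_not_ge fun hle => hc.2 ⟨hle, hc.1.2⟩
    calc P (Sec S x \ Sec S c) ≤ P (Sec S x \ W) + P (W \ Sec S c) :=
          le_trans (measure_mono h1) (measure_union_le _ _)
      _ ≤ e / 16 + e / 2 := add_le_add h2 h3.le
      _ ≤ e := by
          rw [← ENNReal.toReal_le_toReal (by
              refine ENNReal.add_ne_top.2 ⟨?_, ?_⟩ <;> simp [ENNReal.div_eq_top, he']) he',
            ENNReal.toReal_add (by simp [ENNReal.div_eq_top, he'])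
              (by simp [ENNReal.div_eq_top, he']), ENNReal.toReal_div, ENNReal.toReal_div,
            ENNReal.toReal_ofNat, ENNReal.toReal_ofNat]
          linarith
  -- choose the radius
  set r' : ℝ := min (dist c₁ c₂ / 3) (r₀ / 2) with hr'
  have hdpos : 0 < dist c₁ c₂ := dist_pos.2 hcne
  have hr'pos : 0 < r' := lt_min (by linarith) (by linarith)
  have hsub : ∀ c ∈ Good, closedBall c r' ⊆ closedBall x r₀ := by
    intro c hc
    apply closedBall_subset_closedBall'
    have h1 : dist c x ≤ r := hc.1.2
    have h2 : r' ≤ r₀ / 2 := min_le_right _ _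
    linarith
  have hdisj : Disjoint (closedBall c₁ r') (closedBall c₂ r') := by
    apply closedBall_disjoint_closedBall
    have := min_le_left (dist c₁ c₂ / 3) (r₀ / 2)
    linarith
  exact ⟨((c₁, c₂), r'), hc₁.1.1, hc₂.1.1, hcne, hr'pos, hsub c₁ hc₁, hsub c₂ hc₂, hdisj,
    (min_le_right _ _).trans (by linarith), hdefect c₁ hc₁, hdefect c₂ hc₂⟩

end Pick


section Tree

/-- the finset of 0-1 lists of length `m` -/
def Nodes : ℕ → Finset (List Bool)
  | 0 => {[]}
  | m + 1 => (Nodes m).biUnion (fun s => {true :: s, false :: s})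

lemma mem_nodes : ∀ {m : ℕ} {s : List Bool}, s ∈ Nodes m ↔ s.length = m := by
  intro m
  induction m with
  | zero => intro s; simp [Nodes, List.length_eq_zero_iff]
  | succ m ih =>
    intro s
    simp only [Nodes, Finset.mem_biUnion, Finset.mem_insert, Finset.mem_singleton]
    constructor
    · rintro ⟨u, hu, rfl | rfl⟩ <;> simp [ih.1 hu]
    · intro hs
      cases s with
      | nil => simp at hs
      | cons b u =>
        refine ⟨u, ih.2 (by simpa using hs), ?_⟩
        cases b
        · exact Or.inr rfl
        · exact Or.inl rfl

lemma card_nodes (m : ℕ) : (Nodes m).card ≤ 2 ^ m := by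
  induction m with
  | zero => simp [Nodes]
  | succ m ih =>
    refine (Finset.card_biUnion_le).trans ?_
    calc ∑ _s ∈ Nodes m, ({true :: _s, false :: _s} : Finset (List Bool)).card
        ≤ ∑ _s ∈ Nodes m, 2 := by
          refine Finset.sum_le_sum fun s _ => ?_
          exact (Finset.card_insert_le _ _).trans (by simp)
      _ = 2 * (Nodes m).card := by rw [Finset.sum_const, smul_eq_mul, mul_comm]
      _ ≤ 2 * 2 ^ m := by omega
      _ = 2 ^ (m + 1) := by ring

/-- the Cantor scheme tree: each node carries a point and a radius -/
def tree (a₀ : ℝ) (pickf : ℝ → ℕ → ℝ → (ℝ × ℝ) × ℝ) : List Bool → ℝ × ℝ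
  | [] => (a₀, 1)
  | b :: s =>
    let p := tree a₀ pickf s
    let q := pickf p.1 (s.length + 1) (min p.2 ((2:ℝ)⁻¹ ^ (s.length + 1)))
    ((if b then q.1.1 else q.1.2), q.2)

/-- intersection of the sections at all nodes of level `≤ m` -/
def Rset (S : Set (ℝ × (ℕ → ℝ))) (pt : List Bool → ℝ) : ℕ → Set (ℕ → ℝ)
  | 0 => Sec S (pt [])
  | m + 1 => Rset S pt m ∩ ⋂ s ∈ Nodes (m + 1), Sec S (pt s)

lemma Rset_subset_sec (S : Set (ℝ × (ℕ → ℝ))) (pt : List Bool → ℝ) :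
    ∀ m j (s : List Bool), j ≤ m → s ∈ Nodes j → Rset S pt m ⊆ Sec S (pt s) := by
  intro m
  induction m with
  | zero =>
    intro j s hj hs
    interval_cases j
    have : s = [] := List.length_eq_zero_iff.1 (mem_nodes.1 hs)
    subst this
    exact subset_rfl
  | succ m ih =>
    intro j s hj hs
    rcases Nat.lt_or_ge j (m + 1) with h | h
    · exact (inter_subset_left).trans (ih j s (by omega) hs)
    · have hj' : j = m + 1 := le_antisymm hj h
      subst hj'
      exact (inter_subset_right).trans (biInter_subset_of_mem hs)

lemma Rset_antitone (S : Set (ℝ × (ℕ → ℝ))) (pt : List Bool → ℝ) :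
    Antitone (Rset S pt) := by
  refine antitone_nat_of_succ_le fun m => ?_
  exact inter_subset_left

lemma Rset_measurable {S : Set (ℝ × (ℕ → ℝ))} (hS : MeasurableSet S) (pt : List Bool → ℝ)
    (m : ℕ) : MeasurableSet (Rset S pt m) := by
  induction m with
  | zero => exact measurableSet_sec hS _
  | succ m ih =>
    exact ih.inter (Finset.measurableSet_biInter _ fun s _ => measurableSet_sec hS _)

/-- extend a node by `k` `true`s -/
def extT (s : List Bool) (k : ℕ) : List Bool := List.replicate k true ++ s

@[simp] lemma extT_zero (s : List Bool) : extT s 0 = s := rfl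

lemma extT_succ (s : List Bool) (k : ℕ) : extT s (k + 1) = true :: extT s k := by
  simp [extT, List.replicate_succ]

@[simp] lemma extT_length (s : List Bool) (k : ℕ) : (extT s k).length = k + s.length := by
  simp [extT]

end Tree


section Fusion

variable {η : Measure ℝ} [IsProbabilityMeasure η]
  {P : Measure (ℕ → ℝ)} [IsProbabilityMeasure P]

lemma fusion (hη : ∀ x : ℝ, η {x} = 0) {S : Set (ℝ × (ℕ → ℝ))}
    (hS : IsClosed S) (hpos : 0 < (η.prod P) S) :
    ∃ C : Set ℝ, Perfect C ∧ C.Nonempty ∧ 0 < P {y | ∀ a ∈ C, (a, y) ∈ S} := by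
  classical
  have hSm : MeasurableSet S := hS.measurableSet
  have hf : Measurable fun x => P (Sec S x) := measurable_measure_prodMk_left hSm
  have hprodS : (η.prod P) S = ∫⁻ x, P (Sec S x) ∂η := Measure.prod_apply hSm
  set δ : ℝ≥0∞ := (η.prod P) S / 2 with hδdef
  have hδ0 : δ ≠ 0 := (ENNReal.div_pos hpos.ne' (by norm_num)).ne'
  have hδtop : δ ≠ ⊤ := by
    simp [hδdef, ENNReal.div_eq_top, measure_ne_top]
  have hδlt : δ < (η.prod P) S := ENNReal.half_lt_self hpos.ne' (measure_ne_top _ _)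
  -- the set of points with large section
  set A₀ : Set ℝ := {x | δ ≤ P (Sec S x)} with hA₀def
  have hA₀m : MeasurableSet A₀ := hf measurableSet_Ici
  have hA₀pos : 0 < η A₀ := by
    by_contra hcon
    push_neg at hcon
    have hA₀z : η A₀ = 0 := le_antisymm hcon zero_le
    have hb : ∫⁻ x, P (Sec S x) ∂η ≤ δ + η A₀ := by
      have hle : ∀ x, P (Sec S x) ≤ δ + A₀.indicator (fun _ => 1) x := by
        intro x
        by_cases hx : x ∈ A₀
        · rw [Set.indicator_of_mem hx]
          calc P (Sec S x) ≤ 1 := prob_le_one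
            _ ≤ δ + 1 := le_add_self
        · rw [Set.indicator_of_notMem hx, add_zero]
          exact (lt_of_not_ge hx).le
      calc ∫⁻ x, P (Sec S x) ∂η ≤ ∫⁻ x, (δ + A₀.indicator (fun _ => 1) x) ∂η :=
            lintegral_mono hle
        _ = δ + η A₀ := by
            rw [lintegral_add_left measurable_const, lintegral_const,
              lintegral_indicator hA₀m]
            simp
    rw [hA₀z, add_zero, ← hprodS] at hb
    exact absurd hb (not_le.2 hδlt)
  -- the error sequence
  set e : ℕ → ℝ≥0∞ := fun j => δ / 2 * ((2 : ℝ≥0∞)⁻¹) ^ (2 * j) with hedef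
  have htwo0 : ((2 : ℝ≥0∞))⁻¹ ≠ 0 := ENNReal.inv_ne_zero.2 (by norm_num)
  have he0 : ∀ j, e j ≠ 0 := by
    intro j
    exact mul_ne_zero (by simp [ENNReal.div_eq_zero_iff, hδ0]) (pow_ne_zero _ htwo0)
  have he' : ∀ j, e j ≠ ⊤ := by
    intro j
    exact ENNReal.mul_ne_top (by simp [ENNReal.div_eq_top, hδtop])
      (ENNReal.pow_ne_top (by simp))
  have hmulinv : (2 : ℝ≥0∞) * 2⁻¹ = 1 := ENNReal.mul_inv_cancel (by norm_num) (by norm_num)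
  have hcount : ∀ j : ℕ, (2 ^ j : ℝ≥0∞) * e j ≤ δ / 2 * ((2:ℝ≥0∞)⁻¹) ^ j := by
    intro j
    have : (2 ^ j : ℝ≥0∞) * e j = δ / 2 * ((2 * 2⁻¹) ^ j * (2⁻¹ : ℝ≥0∞) ^ j) := by
      rw [hedef]
      simp only []
      rw [two_mul, pow_add, mul_pow]
      ring
    rw [this, hmulinv, one_pow, one_mul]
  -- countable measure-dense family
  obtain ⟨𝒜, h𝒜c, h𝒜d⟩ := exists_countable_measureDense (μ := P)
  -- the good set
  set G : Set ℝ := {x | (∀ W ∈ 𝒜, Tendsto (fun r => ⨍ z in closedBall x r,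
      (P (W \ Sec S z)).toReal ∂η) (𝓝[>] (0:ℝ)) (𝓝 ((P (W \ Sec S x)).toReal)))
    ∧ (x ∈ A₀ → Tendsto (fun r => η (A₀ ∩ closedBall x r) / η (closedBall x r))
        (𝓝[>] (0:ℝ)) (𝓝 1))
    ∧ (∀ r : ℝ, 0 < r → 0 < η (closedBall x r))} with hGdef
  have hG : ∀ᵐ x ∂η, x ∈ G := by
    have h1 : ∀ᵐ x ∂η, ∀ W ∈ 𝒜, Tendsto (fun r => ⨍ z in closedBall x r,
        (P (W \ Sec S z)).toReal ∂η) (𝓝[>] (0:ℝ)) (𝓝 ((P (W \ Sec S x)).toReal)) := by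
      rw [ae_ball_iff h𝒜c]
      intro W hW
      refine ae_tendsto_avg η ((measurable_defect P hSm (h𝒜d.measurable W hW)).ennreal_toReal)
        (fun z => ?_)
      rw [Real.norm_eq_abs, abs_of_nonneg ENNReal.toReal_nonneg]
      exact_mod_cast ENNReal.toReal_mono one_ne_top prob_le_one
    have h2 : ∀ᵐ x ∂η, x ∈ A₀ → Tendsto (fun r => η (A₀ ∩ closedBall x r) /
        η (closedBall x r)) (𝓝[>] (0:ℝ)) (𝓝 1) := by
      filter_upwards [Besicovitch.ae_tendsto_measure_inter_div_of_measurableSet η hA₀m]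
        with x hx hxA
      simpa [Set.indicator_of_mem hxA] using hx
    filter_upwards [h1, h2, ae_ball_pos η] with x hx1 hx2 hx3
    exact ⟨hx1, hx2, hx3⟩
  have hGc : η Gᶜ = 0 := by
    rw [Set.compl_def]
    exact ae_iff.1 hG
  -- the working set A
  set A : Set ℝ := A₀ ∩ G with hAdef
  have hApos : 0 < η A := by
    have h1 : η A₀ ≤ η A + η Gᶜ := by
      refine le_trans (measure_mono ?_) (measure_union_le _ _)
      intro z hz
      by_cases hzG : z ∈ G
      · exact Or.inl ⟨hz, hzG⟩
      · exact Or.inr hzG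
    rw [hGc, add_zero] at h1
    exact lt_of_lt_of_le hA₀pos h1
  -- the selection function
  have mypick : ∀ x, x ∈ A → ∀ (j : ℕ) (r₀ : ℝ), 0 < r₀ →
      ∃ q : (ℝ × ℝ) × ℝ,
      (q.1.1 ∈ A) ∧ (q.1.2 ∈ A) ∧ q.1.1 ≠ q.1.2 ∧ 0 < q.2 ∧
      closedBall q.1.1 q.2 ⊆ closedBall x r₀ ∧ closedBall q.1.2 q.2 ⊆ closedBall x r₀ ∧
      Disjoint (closedBall q.1.1 q.2) (closedBall q.1.2 q.2) ∧ q.2 ≤ r₀ ∧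
      P (Sec S x \ Sec S q.1.1) ≤ e j ∧ P (Sec S x \ Sec S q.1.2) ≤ e j := by
    intro x hx j r₀ hr₀
    exact pick_lemma hη hSm h𝒜d hGc hx.1 hx.2.1 (hx.2.2.1 hx.1) hx.2.2.2
      (e j) (he0 j) (he' j) r₀ hr₀
  obtain ⟨a₀, ha₀⟩ := nonempty_of_measure_ne_zero hApos.ne'
  set pickf : ℝ → ℕ → ℝ → (ℝ × ℝ) × ℝ := fun x j r =>
    if h : x ∈ A ∧ 0 < r then Classical.choose (mypick x h.1 j r h.2) else ((0, 0), 0)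
    with hpickfdef
  set T : List Bool → ℝ × ℝ := tree a₀ pickf with hTdef
  set pt : List Bool → ℝ := fun s => (T s).1 with hptdef
  set rad : List Bool → ℝ := fun s => (T s).2 with hraddef
  -- basic invariant
  have I1 : ∀ s : List Bool, pt s ∈ A ∧ 0 < rad s ∧ rad s ≤ (2:ℝ)⁻¹ ^ s.length := by
    intro s
    induction s with
    | nil =>
      refine ⟨ha₀, one_pos, ?_⟩
      rw [hraddef, hTdef]
      simp [tree]
    | cons b u ih =>
      have hr₀ : 0 < min (T u).2 ((2:ℝ)⁻¹ ^ (u.length + 1)) :=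
        lt_min ih.2.1 (by positivity)
      have hcond : (T u).1 ∈ A ∧ 0 < min (T u).2 ((2:ℝ)⁻¹ ^ (u.length + 1)) := ⟨ih.1, hr₀⟩
      have hTspec : T (b :: u)
          = ((if b then (pickf (T u).1 (u.length + 1)
                (min (T u).2 ((2:ℝ)⁻¹ ^ (u.length + 1)))).1.1
              else (pickf (T u).1 (u.length + 1)
                (min (T u).2 ((2:ℝ)⁻¹ ^ (u.length + 1)))).1.2),
             (pickf (T u).1 (u.length + 1) (min (T u).2 ((2:ℝ)⁻¹ ^ (u.length + 1)))).2) := rfl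
      have hq := Classical.choose_spec (mypick (T u).1 hcond.1 (u.length + 1) _ hcond.2)
      rw [hpickfdef] at hTspec
      simp only [dif_pos hcond] at hTspec
      constructor
      · rw [hptdef]
        simp only [hTspec]
        cases b
        · simpa using hq.2.1
        · simpa using hq.1
      constructor
      · rw [hraddef]; simp only [hTspec]
        exact hq.2.2.2.1
      · rw [hraddef]; simp only [hTspec]
        refine hq.2.2.2.2.2.2.2.1.trans ?_
        simpa using min_le_right _ _
  -- node specification: extract the full pick properties at each node
  have nodeq : ∀ u : List Bool,
      pt (true :: u) ∈ A ∧ pt (false :: u) ∈ A ∧ pt (true :: u) ≠ pt (false :: u) ∧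
      0 < rad (true :: u) ∧ rad (false :: u) = rad (true :: u) ∧
      closedBall (pt (true :: u)) (rad (true :: u)) ⊆ closedBall (pt u) (rad u) ∧
      closedBall (pt (false :: u)) (rad (false :: u)) ⊆ closedBall (pt u) (rad u) ∧
      Disjoint (closedBall (pt (true :: u)) (rad (true :: u)))
        (closedBall (pt (false :: u)) (rad (false :: u))) ∧
      P (Sec S (pt u) \ Sec S (pt (true :: u))) ≤ e (u.length + 1) ∧
      P (Sec S (pt u) \ Sec S (pt (false :: u))) ≤ e (u.length + 1) := by
    intro u
    obtain ⟨hA1, hr1, hrb1⟩ := I1 u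
    have hr₀ : 0 < min (T u).2 ((2:ℝ)⁻¹ ^ (u.length + 1)) := lt_min hr1 (by positivity)
    have hcond : (T u).1 ∈ A ∧ 0 < min (T u).2 ((2:ℝ)⁻¹ ^ (u.length + 1)) := ⟨hA1, hr₀⟩
    have hq := Classical.choose_spec (mypick (T u).1 hcond.1 (u.length + 1) _ hcond.2)
    have hTt : T (true :: u)
        = ((pickf (T u).1 (u.length + 1) (min (T u).2 ((2:ℝ)⁻¹ ^ (u.length + 1)))).1.1,
           (pickf (T u).1 (u.length + 1) (min (T u).2 ((2:ℝ)⁻¹ ^ (u.length + 1)))).2) := by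
      show T (true :: u) = _
      rw [hTdef]
      rfl
    have hTf : T (false :: u)
        = ((pickf (T u).1 (u.length + 1) (min (T u).2 ((2:ℝ)⁻¹ ^ (u.length + 1)))).1.2,
           (pickf (T u).1 (u.length + 1) (min (T u).2 ((2:ℝ)⁻¹ ^ (u.length + 1)))).2) := by
      show T (false :: u) = _
      rw [hTdef]
      rfl
    rw [hpickfdef] at hTt hTf
    simp only [dif_pos hcond] at hTt hTf
    have hballmin : closedBall (T u).1 (min (T u).2 ((2:ℝ)⁻¹ ^ (u.length + 1)))
        ⊆ closedBall (pt u) (rad u) := closedBall_subset_closedBall (min_le_left _ _)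
    refine ⟨?_, ?_, ?_, ?_, ?_, ?_, ?_, ?_, ?_, ?_⟩
    · rw [hptdef]; simp only [hTt]; exact hq.1
    · rw [hptdef]; simp only [hTf]; exact hq.2.1
    · rw [hptdef]; simp only [hTt, hTf]; exact hq.2.2.1
    · rw [hraddef]; simp only [hTt]; exact hq.2.2.2.1
    · rw [hraddef]; simp only [hTt, hTf]
    · rw [hptdef, hraddef]; simp only [hTt]
      exact hq.2.2.2.2.1.trans hballmin
    · rw [hptdef, hraddef]; simp only [hTf]
      exact hq.2.2.2.2.2.1.trans hballmin
    · rw [hptdef, hraddef]; simp only [hTt, hTf]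
      exact hq.2.2.2.2.2.2.1
    · rw [hptdef]; simp only [hTt]
      exact hq.2.2.2.2.2.2.2.2.1
    · rw [hptdef]; simp only [hTf]
      exact hq.2.2.2.2.2.2.2.2.2
  -- nested balls / disjointness for arbitrary cons
  have I2 : ∀ (b : Bool) (u : List Bool),
      closedBall (pt (b :: u)) (rad (b :: u)) ⊆ closedBall (pt u) (rad u) := by
    intro b u
    cases b
    · exact (nodeq u).2.2.2.2.2.2.1
    · exact (nodeq u).2.2.2.2.2.1
  have I4 : ∀ (b : Bool) (u : List Bool),
      P (Sec S (pt u) \ Sec S (pt (b :: u))) ≤ e (u.length + 1) := by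
    intro b u
    cases b
    · exact (nodeq u).2.2.2.2.2.2.2.2.2
    · exact (nodeq u).2.2.2.2.2.2.2.2.1
  have I3 : ∀ (b b' : Bool) (u : List Bool), b ≠ b' →
      Disjoint (closedBall (pt (b :: u)) (rad (b :: u)))
        (closedBall (pt (b' :: u)) (rad (b' :: u))) := by
    intro b b' u hbb
    cases b
    · cases b'
      · exact absurd rfl hbb
      · exact ((nodeq u).2.2.2.2.2.2.2.1).symm
    · cases b'
      · exact (nodeq u).2.2.2.2.2.2.2.1
      · exact absurd rfl hbb
  -- same-level disjointness
  have hdisjlevel : ∀ (m : ℕ) (s s' : List Bool), s ∈ Nodes m → s' ∈ Nodes m → s ≠ s' →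
      Disjoint (closedBall (pt s) (rad s)) (closedBall (pt s') (rad s')) := by
    intro m
    induction m with
    | zero =>
      intro s s' hs hs' hne
      exact absurd ((List.length_eq_zero_iff.1 (mem_nodes.1 hs)).trans
        (List.length_eq_zero_iff.1 (mem_nodes.1 hs')).symm) hne
    | succ m ih =>
      rintro s s' hs hs' hne
      rcases s with _ | ⟨b, u⟩
      · simp [mem_nodes] at hs
      rcases s' with _ | ⟨b', u'⟩
      · simp [mem_nodes] at hs'
      have hu : u ∈ Nodes m := mem_nodes.2 (by have := mem_nodes.1 hs; simpa using this)
      have hu' : u' ∈ Nodes m := mem_nodes.2 (by have := mem_nodes.1 hs'; simpa using this)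
      by_cases huu : u = u'
      · subst huu
        have hbb : b ≠ b' := fun h => hne (by rw [h])
        exact I3 b b' u hbb
      · exact Set.disjoint_of_subset (I2 b u) (I2 b' u') (ih u u' hu hu' huu)
  -- the measure of the residual sets
  have hRm : ∀ m : ℕ, δ / 2 + δ / 2 * ((2:ℝ≥0∞)⁻¹) ^ m ≤ P (Rset S pt m) := by
    intro m
    induction m with
    | zero =>
      have : P (Sec S (pt [])) ≥ δ := (I1 []).1.1
      simpa [Rset, ENNReal.add_halves] using this
    | succ m ih =>
      have hsplit : P (Rset S pt m) ≤ P (Rset S pt (m + 1)) + δ / 2 * ((2:ℝ≥0∞)⁻¹) ^ (m+1) := by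
        have h1 : P (Rset S pt m) ≤ P (Rset S pt (m + 1)) +
            P (Rset S pt m \ Rset S pt (m + 1)) := by
          refine le_trans (measure_mono ?_) (measure_union_le _ _)
          intro z hz
          by_cases hz' : z ∈ Rset S pt (m + 1)
          · exact Or.inl hz'
          · exact Or.inr ⟨hz, hz'⟩
        have h2 : Rset S pt m \ Rset S pt (m + 1) ⊆
            ⋃ s ∈ Nodes (m + 1), (Rset S pt m \ Sec S (pt s)) := by
          intro z hz
          have hz1 := hz.1
          have hz2 := hz.2
          rw [show Rset S pt (m+1) = Rset S pt m ∩ ⋂ s ∈ Nodes (m + 1), Sec S (pt s) from rfl]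
            at hz2
          have : ¬ z ∈ ⋂ s ∈ Nodes (m + 1), Sec S (pt s) := fun h => hz2 ⟨hz1, h⟩
          rw [mem_iInter₂] at this
          push_neg at this
          obtain ⟨s, hs, hzs⟩ := this
          exact mem_iUnion₂.2 ⟨s, hs, hz1, hzs⟩
        have h3 : P (Rset S pt m \ Rset S pt (m + 1)) ≤
            ∑ s ∈ Nodes (m + 1), P (Rset S pt m \ Sec S (pt s)) :=
          (measure_mono h2).trans (measure_biUnion_finset_le _ _)
        have h4 : ∀ s ∈ Nodes (m + 1), P (Rset S pt m \ Sec S (pt s)) ≤ e (m + 1) := by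
          intro s hs
          rcases s with _ | ⟨b, u⟩
          · simp [mem_nodes] at hs
          have hu : u ∈ Nodes m := mem_nodes.2 (by have := mem_nodes.1 hs; simpa using this)
          have hum : u.length = m := mem_nodes.1 hu
          have hsub : Rset S pt m ⊆ Sec S (pt u) :=
            Rset_subset_sec S pt m m u le_rfl hu
          calc P (Rset S pt m \ Sec S (pt (b :: u)))
              ≤ P (Sec S (pt u) \ Sec S (pt (b :: u))) :=
                measure_mono (fun z hz => ⟨hsub hz.1, hz.2⟩)
            _ ≤ e (u.length + 1) := I4 b u
            _ = e (m + 1) := by rw [hum]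
        have h5 : ∑ s ∈ Nodes (m + 1), P (Rset S pt m \ Sec S (pt s))
            ≤ (Nodes (m + 1)).card • e (m + 1) :=
          Finset.sum_le_card_nsmul _ _ _ h4
        have h6 : ((Nodes (m + 1)).card : ℝ≥0∞) * e (m + 1) ≤ (2 ^ (m+1) : ℝ≥0∞) * e (m+1) := by
          refine mul_le_mul_left ?_ _
          have := card_nodes (m + 1)
          exact_mod_cast Nat.cast_le.2 this
        have h7 : P (Rset S pt m \ Rset S pt (m + 1)) ≤ δ / 2 * ((2:ℝ≥0∞)⁻¹) ^ (m+1) := by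
          refine h3.trans ?_
          rw [← Nat.cast_smul_eq_nsmul ℝ≥0∞] at h5
          refine h5.trans ?_
          refine le_trans ?_ (hcount (m+1))
          simpa using h6
        exact h1.trans (add_le_add_right h7 _)
      have hfin : δ / 2 * ((2:ℝ≥0∞)⁻¹) ^ (m+1) ≠ ⊤ :=
        ENNReal.mul_ne_top (by simp [ENNReal.div_eq_top, hδtop]) (ENNReal.pow_ne_top (by simp))
      have hdm : δ / 2 + δ / 2 * ((2:ℝ≥0∞)⁻¹) ^ m
          = (δ / 2 + δ / 2 * ((2:ℝ≥0∞)⁻¹) ^ (m+1)) + δ / 2 * ((2:ℝ≥0∞)⁻¹) ^ (m+1) := by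
        have hp : ((2:ℝ≥0∞)⁻¹) ^ m = ((2:ℝ≥0∞)⁻¹) ^ (m+1) + ((2:ℝ≥0∞)⁻¹) ^ (m+1) := by
          rw [← two_mul, pow_succ, mul_comm ((2:ℝ≥0∞)⁻¹ ^ m) 2⁻¹, ← mul_assoc, hmulinv,
            one_mul]
        rw [add_assoc, ← mul_add, ← hp]
      have h8 : (δ / 2 + δ / 2 * ((2:ℝ≥0∞)⁻¹) ^ (m+1)) + δ / 2 * ((2:ℝ≥0∞)⁻¹) ^ (m+1)
          ≤ P (Rset S pt (m + 1)) + δ / 2 * ((2:ℝ≥0∞)⁻¹) ^ (m+1) := by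
        rw [← hdm]
        exact le_trans ih hsplit
      exact (ENNReal.add_le_add_iff_right hfin).1 h8
  -- the residual intersection has positive measure
  have hRinf : δ / 2 ≤ P (⋂ m, Rset S pt m) := by
    have hT := tendsto_measure_iInter_atTop (μ := P)
      (fun m => (Rset_measurable hSm pt m).nullMeasurableSet)
      (Rset_antitone S pt) ⟨0, measure_ne_top _ _⟩
    refine ge_of_tendsto hT (Eventually.of_forall fun m => ?_)
    exact (self_le_add_right _ _).trans (hRm m)
  -- the Cantor set
  set C : Set ℝ := ⋂ m, ⋃ s ∈ Nodes m, closedBall (pt s) (rad s) with hCdef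
  have hCclosed : IsClosed C := by
    refine isClosed_iInter fun m => ?_
    exact (Nodes m).finite_toSet.isClosed_biUnion fun s _ => Metric.isClosed_closedBall
  -- each subtree has a limit point in C
  have hsubtree : ∀ s : List Bool, ∃ y ∈ C, y ∈ closedBall (pt s) (rad s) := by
    intro s
    have hdistball : ∀ (b : Bool) (u : List Bool), pt (b :: u) ∈ closedBall (pt u) (rad u) :=
      fun b u => I2 b u (mem_closedBall_self (I1 (b :: u)).2.1.le)
    have hcauchy : CauchySeq (fun k => pt (extT s k)) := by
      refine cauchySeq_of_le_geometric (2⁻¹ : ℝ) ((2:ℝ)⁻¹ ^ s.length) (by norm_num)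
        (fun k => ?_)
      have h1 : dist (pt (extT s k)) (pt (extT s (k+1))) ≤ rad (extT s k) := by
        rw [extT_succ, dist_comm]
        exact hdistball true (extT s k)
      refine h1.trans ?_
      have h2 := (I1 (extT s k)).2.2
      rw [extT_length] at h2
      calc rad (extT s k) ≤ (2:ℝ)⁻¹ ^ (k + s.length) := h2
        _ = (2:ℝ)⁻¹ ^ s.length * (2⁻¹:ℝ) ^ k := by rw [← pow_add, add_comm]
    obtain ⟨y, hy⟩ := cauchySeq_tendsto_of_complete hcauchy
    have hnest : ∀ k j, k ≤ j →
        closedBall (pt (extT s j)) (rad (extT s j)) ⊆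
          closedBall (pt (extT s k)) (rad (extT s k)) := by
      intro k j hkj
      induction j with
      | zero =>
        have hk : k = 0 := by omega
        subst hk; exact subset_rfl
      | succ j ih =>
        rcases Nat.lt_or_ge k (j+1) with h | h
        · refine subset_trans ?_ (ih (by omega))
          rw [extT_succ]
          exact I2 true (extT s j)
        · have hk : k = j + 1 := by omega
          subst hk; exact subset_rfl
    have hymem : ∀ k, y ∈ closedBall (pt (extT s k)) (rad (extT s k)) := by
      intro k
      refine Metric.isClosed_closedBall.mem_of_tendsto hy ?_
      refine eventually_atTop.2 ⟨k, fun j hj => ?_⟩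
      exact hnest k j hj (mem_closedBall_self (I1 (extT s j)).2.1.le)
    have hdrop : ∀ (u : List Bool) (i : ℕ),
        closedBall (pt u) (rad u) ⊆ closedBall (pt (u.drop i)) (rad (u.drop i)) := by
      intro u i
      induction i with
      | zero => exact subset_rfl
      | succ i ih =>
        have hdd : u.drop (i+1) = (u.drop i).drop 1 := by
          rw [List.drop_drop, Nat.add_comm]
        rcases hcase : u.drop i with _ | ⟨b, v⟩
        · rw [hdd, hcase]
          rw [hcase] at ih
          simpa using ih
        · rw [hdd, hcase]
          rw [hcase] at ih
          simp only [List.drop_succ_cons, List.drop_zero]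
          exact ih.trans (I2 b v)
    have hyC : y ∈ C := by
      rw [hCdef]
      refine mem_iInter.2 fun m => ?_
      rcases le_or_gt s.length m with h | h
      · refine mem_iUnion₂.2 ⟨extT s (m - s.length), ?_, hymem _⟩
        rw [mem_nodes, extT_length]
        omega
      · refine mem_iUnion₂.2 ⟨s.drop (s.length - m), ?_, ?_⟩
        · rw [mem_nodes, List.length_drop]
          omega
        · exact hdrop s (s.length - m) (hymem 0)
    exact ⟨y, hyC, hymem 0⟩
  -- C is perfect
  have hCperf : Perfect C := by
    constructor
    · exact hCclosed
    · intro x hx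
      rw [accPt_iff_nhds]
      intro U hU
      obtain ⟨ε, hε, hball⟩ := Metric.mem_nhds_iff.1 hU
      obtain ⟨m, hm⟩ := exists_pow_lt_of_lt_one (show (0:ℝ) < ε/2 by linarith)
        (by norm_num : (2:ℝ)⁻¹ < 1)
      have hx' := mem_iInter.1 hx
      obtain ⟨s1, hs1, hxs1⟩ := mem_iUnion₂.1 (hx' (m+1))
      rcases s1 with _ | ⟨b, u⟩
      · rw [mem_nodes] at hs1
        simp at hs1
      have hu : u ∈ Nodes m := mem_nodes.2 (by have := mem_nodes.1 hs1; simpa using this)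
      obtain ⟨y, hyC, hyball⟩ := hsubtree ((!b) :: u)
      refine ⟨y, ⟨hball ?_, hyC⟩, ?_⟩
      · rw [Metric.mem_ball]
        have h1 : dist x (pt u) ≤ rad u := I2 b u hxs1
        have h2 : dist y (pt u) ≤ rad u := I2 (!b) u hyball
        have h3 : rad u ≤ (2:ℝ)⁻¹ ^ m := by
          have h4 := (I1 u).2.2
          rwa [mem_nodes.1 hu] at h4
        calc dist y x ≤ dist y (pt u) + dist x (pt u) := dist_triangle_right y x (pt u)
          _ ≤ (2:ℝ)⁻¹ ^ m + (2:ℝ)⁻¹ ^ m := add_le_add (h2.trans h3) (h1.trans h3)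
          _ < ε := by linarith
      · intro hxy
        have hdisj := I3 (!b) b u (by cases b <;> simp)
        subst hxy
        exact (Set.disjoint_left.1 hdisj) hyball hxs1
  obtain ⟨y0, hy0C, _⟩ := hsubtree []
  -- the residual set is contained in the target section intersection
  have hsubQ : (⋂ m, Rset S pt m) ⊆ {y | ∀ a ∈ C, (a, y) ∈ S} := by
    intro y hy a haC
    have hnode : ∀ m : ℕ, ∃ s ∈ Nodes m, a ∈ closedBall (pt s) (rad s) := by
      intro m
      obtain ⟨s, hs, h⟩ := mem_iUnion₂.1 (mem_iInter.1 haC m)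
      exact ⟨s, hs, h⟩
    choose sfun hsf haf using hnode
    have hmem : ∀ m, (pt (sfun m), y) ∈ S := by
      intro m
      exact Rset_subset_sec S pt m m (sfun m) le_rfl (hsf m) (mem_iInter.1 hy m)
    have htend : Tendsto (fun m => pt (sfun m)) atTop (𝓝 a) := by
      rw [tendsto_iff_dist_tendsto_zero]
      refine squeeze_zero (fun m => dist_nonneg) (fun m => ?_)
        (tendsto_pow_atTop_nhds_zero_of_lt_one (by norm_num) (by norm_num : (2:ℝ)⁻¹ < 1))
      have h1 : dist (pt (sfun m)) a ≤ rad (sfun m) := by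
        rw [dist_comm]
        exact haf m
      have h2 : rad (sfun m) ≤ (2:ℝ)⁻¹ ^ m := by
        have h3 := (I1 (sfun m)).2.2
        rwa [mem_nodes.1 (hsf m)] at h3
      exact h1.trans h2
    have htend2 : Tendsto (fun m => (pt (sfun m), y)) atTop (𝓝 (a, y)) :=
      htend.prodMk_nhds tendsto_const_nhds
    exact hS.mem_of_tendsto htend2 (Eventually.of_forall hmem)
  refine ⟨C, hCperf, ⟨y0, hy0C⟩, ?_⟩
  have h0 : (0:ℝ≥0∞) < δ / 2 := ENNReal.div_pos hδ0 (by norm_num)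
  exact lt_of_lt_of_le h0 (hRinf.trans (measure_mono hsubQ))

end Fusion


end PerfectProd

open MeasureTheory

/-- Let `(ν n)` be atomless Borel probability measures on `ℝ` and let `μ` be their product
measure on `ℕ → ℝ` (the Borel probability measure assigning to each cylinder set the product of
the coordinate measures). If `D ⊆ ℕ → ℝ` is a Borel set with `μ D > 0`, then there exist perfect
sets `C n ⊆ ℝ` such that `∏ n, C n ⊆ D`. -/
theorem stmt18 (ν : ℕ → Measure ℝ) (hprob : ∀ n, IsProbabilityMeasure (ν n))
    (hatom : ∀ n, ∀ x : ℝ, ν n {x} = 0)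
    (μ : Measure (ℕ → ℝ)) (hμprob : IsProbabilityMeasure μ)
    (hcyl : ∀ (s : Finset ℕ) (t : ℕ → Set ℝ), (∀ n ∈ s, MeasurableSet (t n)) →
      μ (Set.pi ↑s t) = ∏ n ∈ s, ν n (t n))
    (D : Set (ℕ → ℝ)) (hD : MeasurableSet D) (hpos : 0 < μ D) :
    ∃ C : ℕ → Set ℝ, (∀ n, Perfect (C n) ∧ (C n).Nonempty) ∧ Set.univ.pi C ⊆ D := by
  classical
  haveI : ∀ n, IsProbabilityMeasure (ν n) := hprob
  haveI : IsProbabilityMeasure μ := hμprob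
  -- a closed subset of positive measure
  obtain ⟨K, hKD, hKclosed, hKgt⟩ := hD.exists_isClosed_lt_add (measure_ne_top μ D)
    (ε := μ D) hpos.ne'
  have hKpos : 0 < μ K := by
    by_contra h
    push_neg at h
    rw [le_antisymm h zero_le, zero_add] at hKgt
    exact lt_irrefl _ hKgt
  -- tail measures
  let Pm : ℕ → Measure (ℕ → ℝ) := fun m => μ.map (PerfectProd.shiftMap m)
  have hPminst : ∀ m, IsProbabilityMeasure (Pm m) := fun m =>
    Measure.isProbabilityMeasure_map (PerfectProd.measurable_shiftMap m).aemeasurable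
  have hP0 : Pm 0 = μ := by
    show μ.map (PerfectProd.shiftMap 0) = μ
    have h : PerfectProd.shiftMap 0 = id := rfl
    rw [h, Measure.map_id]
  -- one coordinate step
  have step : ∀ (m : ℕ) (S : Set (ℕ → ℝ)), IsClosed S → 0 < Pm m S →
      ∃ p : Set ℝ × Set (ℕ → ℝ), Perfect p.1 ∧ p.1.Nonempty ∧ IsClosed p.2 ∧
        0 < Pm (m+1) p.2 ∧ ∀ a ∈ p.1, ∀ y ∈ p.2, PerfectProd.cons a y ∈ S := by
    intro m S hScl hSpos
    haveI := hPminst (m+1)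
    haveI := hPminst m
    set S' : Set (ℝ × (ℕ → ℝ)) := (fun p : ℝ × (ℕ → ℝ) => PerfectProd.cons p.1 p.2) ⁻¹' S
      with hS'def
    have hkey : ((ν m).prod (Pm (m+1))) S' = Pm m S := by
      rw [hS'def, ← Measure.map_apply PerfectProd.measurable_cons hScl.measurableSet,
        PerfectProd.map_shift_succ ν μ hcyl m]
    have hS'cl : IsClosed S' := hScl.preimage PerfectProd.continuous_cons
    have hpos' : 0 < ((ν m).prod (Pm (m+1))) S' := by rw [hkey]; exact hSpos
    obtain ⟨C, hCperf, hCne, hCpos⟩ :=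
      PerfectProd.fusion (η := ν m) (P := Pm (m+1)) (hatom m) hS'cl hpos'
    refine ⟨(C, {y | ∀ a ∈ C, (a, y) ∈ S'}), hCperf, hCne, ?_, hCpos, ?_⟩
    · have hQ : {y | ∀ a ∈ C, (a, y) ∈ S'} = ⋂ a ∈ C, (fun y => (a, y)) ⁻¹' S' := by
        ext y
        simp
      rw [hQ]
      exact isClosed_biInter fun a _ => hS'cl.preimage (Continuous.prodMk_right a)
    · intro a ha y hy
      exact hy a ha
  -- the recursion along coordinates
  let g : ℕ → Set ℝ × Set (ℕ → ℝ) := fun n => Nat.rec (∅, K)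
    (fun m ih => if h : IsClosed ih.2 ∧ 0 < Pm m ih.2
      then Classical.choose (step m ih.2 h.1 h.2) else (∅, ∅)) n
  have hg0 : (g 0).2 = K := rfl
  have hinv : ∀ m, IsClosed (g m).2 ∧ 0 < Pm m (g m).2 := by
    intro m
    induction m with
    | zero => exact ⟨hKclosed, by rw [hg0, hP0]; exact hKpos⟩
    | succ m ih =>
      have hg : g (m+1) = Classical.choose (step m (g m).2 ih.1 ih.2) := by
        show (if h : IsClosed (g m).2 ∧ 0 < Pm m (g m).2
          then Classical.choose (step m (g m).2 h.1 h.2) else (∅, ∅)) = _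
        rw [dif_pos ⟨ih.1, ih.2⟩]
      have hspec := Classical.choose_spec (step m (g m).2 ih.1 ih.2)
      rw [hg]
      exact ⟨hspec.2.2.1, hspec.2.2.2.1⟩
  have hspec : ∀ m, Perfect (g (m+1)).1 ∧ (g (m+1)).1.Nonempty ∧ IsClosed (g (m+1)).2 ∧
      0 < Pm (m+1) (g (m+1)).2 ∧
      ∀ a ∈ (g (m+1)).1, ∀ y ∈ (g (m+1)).2, PerfectProd.cons a y ∈ (g m).2 := by
    intro m
    have hg : g (m+1) = Classical.choose (step m (g m).2 (hinv m).1 (hinv m).2) := by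
      show (if h : IsClosed (g m).2 ∧ 0 < Pm m (g m).2
        then Classical.choose (step m (g m).2 h.1 h.2) else (∅, ∅)) = _
      rw [dif_pos ⟨(hinv m).1, (hinv m).2⟩]
    have h := Classical.choose_spec (step m (g m).2 (hinv m).1 (hinv m).2)
    rw [hg]
    exact h
  refine ⟨fun n => (g (n+1)).1, fun n => ⟨(hspec n).1, (hspec n).2.1⟩, ?_⟩
  intro z hz
  -- approximating sequences
  have hyex : ∀ m : ℕ, ∃ y, y ∈ (g (m+1)).2 := fun m =>
    nonempty_of_measure_ne_zero (hspec m).2.2.2.1.ne'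
  choose yy hyy using hyex
  have happrox : ∀ m : ℕ, (fun n => if n ≤ m then z n else yy m (n - (m+1))) ∈ (g 0).2 := by
    intro m
    have key : ∀ d k, k + d = m + 1 →
        (fun n => if n + k ≤ m then z (n + k) else yy m (n + k - (m+1))) ∈ (g k).2 := by
      intro d
      induction d with
      | zero =>
        intro k hk
        have hk' : k = m + 1 := by omega
        subst hk'
        have heq : (fun n => if n + (m+1) ≤ m then z (n + (m+1))
            else yy m (n + (m+1) - (m+1))) = yy m := by
          funext n
          rw [if_neg (by omega)]
          congr 1
          omega
        rw [heq]
        exact hyy m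
      | succ d ihd =>
        intro k hk
        have hkm : k ≤ m := by omega
        have hcons : (fun n => if n + k ≤ m then z (n + k) else yy m (n + k - (m+1)))
            = PerfectProd.cons (z k) (fun n => if n + (k+1) ≤ m then z (n + (k+1))
              else yy m (n + (k+1) - (m+1))) := by
          funext n
          cases n with
          | zero =>
            show (if 0 + k ≤ m then z (0 + k) else yy m (0 + k - (m+1))) = z k
            rw [if_pos (by omega)]
            congr 1
            omega
          | succ n =>
            show (if (n+1) + k ≤ m then z ((n+1) + k) else yy m ((n+1) + k - (m+1)))
              = (if n + (k+1) ≤ m then z (n + (k+1)) else yy m (n + (k+1) - (m+1)))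
            have h1 : (n+1) + k = n + (k+1) := by omega
            rw [h1]
        rw [hcons]
        exact (hspec k).2.2.2.2 (z k) (hz k (Set.mem_univ k)) _ (ihd (k+1) (by omega))
    have h := key (m+1) 0 (by omega)
    have heq : (fun n => if n + 0 ≤ m then z (n + 0) else yy m (n + 0 - (m+1)))
        = (fun n => if n ≤ m then z n else yy m (n - (m+1))) := by
      funext n
      congr 1
    rw [← heq]
    exact h
  -- pass to the limit
  have htendz : Filter.Tendsto (fun m => (fun n => if n ≤ m then z n else yy m (n - (m+1))))
      Filter.atTop (nhds z) := by
    rw [tendsto_pi_nhds]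
    intro n
    have hEq : (fun _ : ℕ => z n) =ᶠ[Filter.atTop]
        (fun m => if n ≤ m then z n else yy m (n - (m+1))) := by
      filter_upwards [Filter.eventually_ge_atTop n] with m hm
      rw [if_pos hm]
    exact Filter.Tendsto.congr' hEq tendsto_const_nhds
  have hzK : z ∈ (g 0).2 :=
    hKclosed.mem_of_tendsto htendz (Filter.Eventually.of_forall happrox)
  exact hKD hzK
end
end
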